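/- arXiv:1011.0495 — 3 statements merged into one kernel-verified Lean document; each statement's English description precedes it below -/
import Mathlib

section
/- Let D = (V, A) be a finite digraph and let s, t ∈ V with s ≠ t and (s, t) ∉ A. Then the maximum cardinality of a set of pairwise internally node-disjoint directed paths from s to t equals the minimum cardinality of an s–t disconnecting node set, i.e. of a set W ⊆ V \ {s, t} such that every directed path from s to t contains a vertex of W. -/
/-- The list of arcs traversed by a path given as a list of vertices. -/
def pathArcs {V : Type*} (p : List V) : List (V × V) := p.zip p.tail

/-- `p` is a directed path from `s` to `t` in the digraph with arc set `E`:
a nonempty list of pairwise distinct vertices, starting at `s`, ending at `t`,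
with consecutive vertices joined by arcs of `E`. -/
def IsPath {V : Type*} (E : Finset (V × V)) (s t : V) (p : List V) : Prop :=
  p.Nodup ∧ p.Chain' (fun u v => (u, v) ∈ E) ∧ p.head? = some s ∧ p.getLast? = some t

/-- Two paths are edge-disjoint if they share no arc. -/
def EdgeDisjoint {V : Type*} (p q : List V) : Prop :=
  ∀ a : V × V, a ∈ pathArcs p → a ∉ pathArcs q

/-- Two `s`–`t` paths are internally node-disjoint if the only vertices they share
are `s` and `t`. -/
def IntDisjoint {V : Type*} (s t : V) (p q : List V) : Prop :=
  ∀ v : V, v ∈ p → v ∈ q → v = s ∨ v = t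

/-- `P` is a set of pairwise edge-disjoint directed paths from `s` to `t`. -/
def IsEdgeDisjointFamily {V : Type*} (E : Finset (V × V)) (s t : V)
    (P : Finset (List V)) : Prop :=
  (∀ p ∈ P, IsPath E s t p) ∧ (P : Set (List V)).Pairwise EdgeDisjoint

/-- `P` is a set of pairwise internally node-disjoint directed paths from `s` to `t`. -/
def IsNodeDisjointFamily {V : Type*} (E : Finset (V × V)) (s t : V)
    (P : Finset (List V)) : Prop :=
  (∀ p ∈ P, IsPath E s t p) ∧ (P : Set (List V)).Pairwise (IntDisjoint s t)

open List Finset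

namespace MengerAux

variable {V : Type*}

theorem arcs_cons (x y : V) (l : List V) : pathArcs (x::y::l) = (x,y) :: pathArcs (y::l) := rfl

theorem arcs_nil (x : V) : pathArcs [x] = [] := rfl

theorem chain'_iff_arcs (R : V → V → Prop) : ∀ p : List V, Chain' R p ↔ ∀ a ∈ pathArcs p, R a.1 a.2
  | [] => by simp [pathArcs, List.Chain']
  | [x] => by simp [pathArcs, List.Chain']
  | x :: y :: l => by
      have ih := chain'_iff_arcs R (y::l)
      simp only [List.Chain'] at ih ⊢
      rw [List.isChain_cons_cons, arcs_cons, ih]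
      simp

theorem arc_fst_mem {p : List V} {a : V × V} (h : a ∈ pathArcs p) : a.1 ∈ p := by
  induction p with
  | nil => simp [pathArcs] at h
  | cons x l ih =>
    match l, h with
    | [], h => simp [pathArcs] at h
    | y :: l, h =>
      rw [arcs_cons] at h
      rcases List.mem_cons.1 h with h | h
      · simp [h]
      · exact List.mem_cons_of_mem _ (ih h)

theorem arc_snd_mem_tail {p : List V} {a : V × V} (h : a ∈ pathArcs p) : a.2 ∈ p.tail := by
  induction p with
  | nil => simp [pathArcs] at h
  | cons x l ih =>
    match l, h with
    | [], h => simp [pathArcs] at h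
    | y :: l, h =>
      rw [arcs_cons] at h
      rcases List.mem_cons.1 h with h | h
      · simp [h]
      · exact show a.2 ∈ y :: l from List.mem_of_mem_tail (ih h)

theorem arc_snd_mem {p : List V} {a : V × V} (h : a ∈ pathArcs p) : a.2 ∈ p :=
  List.mem_of_mem_tail (arc_snd_mem_tail h)

theorem arc_fst_mem_dropLast {p : List V} {a : V × V} (h : a ∈ pathArcs p) : a.1 ∈ p.dropLast := by
  induction p with
  | nil => simp [pathArcs] at h
  | cons x l ih =>
    match l, h with
    | [], h => simp [pathArcs] at h
    | y :: l, h =>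
      rw [arcs_cons] at h
      rw [List.dropLast_cons₂]
      rcases List.mem_cons.1 h with h | h
      · simp [Prod.ext_iff] at h; simp [h.1]
      · exact List.mem_cons_of_mem _ (ih h)

theorem exists_arc_of_mem_tail {p : List V} {v : V} (h : v ∈ p.tail) :
    ∃ u, (u, v) ∈ pathArcs p := by
  induction p with
  | nil => simp at h
  | cons x l ih =>
    match l, h with
    | y :: l, h =>
      rcases List.mem_cons.1 h with h | h
      · exact ⟨x, by simp [arcs_cons, h]⟩
      · rcases ih h with ⟨u, hu⟩
        exact ⟨u, by rw [arcs_cons]; exact List.mem_cons_of_mem _ hu⟩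

theorem exists_arc_of_mem_dropLast {p : List V} {v : V} (h : v ∈ p.dropLast) :
    ∃ z, (v, z) ∈ pathArcs p := by
  induction p with
  | nil => simp at h
  | cons x l ih =>
    match l, h with
    | [], h => simp at h
    | y :: l, h =>
      rw [List.dropLast_cons₂] at h
      rcases List.mem_cons.1 h with h | h
      · exact ⟨y, by simp [arcs_cons, h]⟩
      · rcases ih h with ⟨z, hz⟩
        exact ⟨z, by rw [arcs_cons]; exact List.mem_cons_of_mem _ hz⟩

theorem arcs_target_inj {p : List V} (hnd : p.Nodup) {u u' v : V}
    (h : (u, v) ∈ pathArcs p) (h' : (u', v) ∈ pathArcs p) : u = u' := by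
  induction p with
  | nil => simp [pathArcs] at h
  | cons x l ih =>
    match l, h, h' with
    | [], h, _ => simp [pathArcs] at h
    | y :: l, h, h' =>
      rw [arcs_cons] at h h'
      have hynl : y ∉ l := (List.nodup_cons.1 (List.nodup_cons.1 hnd).2).1
      rcases List.mem_cons.1 h with h | h <;> rcases List.mem_cons.1 h' with h' | h'
      · simp [Prod.ext_iff] at h h'; rw [h.1, h'.1]
      · exfalso
        simp [Prod.ext_iff] at h
        have hv : v ∈ l := by simpa using arc_snd_mem_tail h'
        rw [← h.2] at hynl
        exact hynl hv
      · exfalso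
        simp [Prod.ext_iff] at h'
        have hv : v ∈ l := by simpa using arc_snd_mem_tail h
        rw [← h'.2] at hynl
        exact hynl hv
      · exact ih (List.nodup_cons.1 hnd).2 h h'

theorem arcs_prefix_subset : ∀ {p q : List V}, q <+: p → ∀ a ∈ pathArcs q, a ∈ pathArcs p := by
  intro p q hq a ha
  obtain ⟨r, rfl⟩ := hq
  induction q with
  | nil => simp [pathArcs] at ha
  | cons x l ih =>
    match l, ha with
    | [], ha => simp [pathArcs] at ha
    | y :: l, ha =>
      rw [arcs_cons] at ha
      show a ∈ pathArcs (x :: y :: (l ++ r))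
      rw [arcs_cons]
      rcases List.mem_cons.1 ha with ha | ha
      · exact ha ▸ List.mem_cons_self
      · exact List.mem_cons_of_mem _ (ih ha)

theorem arcs_suffix_subset : ∀ {p q : List V}, q <:+ p → ∀ a ∈ pathArcs q, a ∈ pathArcs p := by
  intro p q hq a ha
  obtain ⟨r, rfl⟩ := hq
  induction r with
  | nil => simpa using ha
  | cons x r ih =>
    have hmem : a ∈ pathArcs (r ++ q) := ih
    show a ∈ pathArcs (x :: (r ++ q))
    match hrq : r ++ q, hmem with
    | [], hmem => simp [pathArcs] at hmem
    | y :: l, hmem => rw [arcs_cons]; exact List.mem_cons_of_mem _ hmem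

theorem not_mem_dropLast_of_nodup {p : List V} (hnd : p.Nodup) (hne : p ≠ []) :
    p.getLast hne ∉ p.dropLast := by
  intro hmem
  have := List.dropLast_append_getLast hne
  rw [← this] at hnd
  rcases List.nodup_append.1 hnd with ⟨-, -, hd⟩
  exact hd _ hmem _ (by simp) rfl

theorem two_decomp : ∀ (p : List V), 2 ≤ p.length → ∃ l b c, p = l ++ [b, c]
  | [], h => by simp at h
  | [x], h => by simp at h
  | [x, y], _ => ⟨[], x, y, rfl⟩
  | x :: y :: z :: l, _ => by
      obtain ⟨l', b, c, h⟩ := two_decomp (y :: z :: l) (by simp)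
      exact ⟨x :: l', b, c, by rw [h]; rfl⟩

/-- extract a nodup path from a walk -/
theorem dedup_walk (R : V → V → Prop) [DecidableEq V] :
    ∀ (n : ℕ) (p : List V), p.length ≤ n → p ≠ [] → p.Chain' R →
    ∃ q : List V, q ≠ [] ∧ q.Nodup ∧ q.Chain' R ∧ q.head? = p.head? ∧
      q.getLast? = p.getLast? ∧ ∀ x ∈ q, x ∈ p := by
  intro n
  induction n with
  | zero => intro p hl hne _; interval_cases h : p.length <;> simp_all
  | succ n ih =>
    intro p hl hne hch
    match p with
    | [x] => exact ⟨[x], by simp [List.Chain']⟩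
    | x :: y :: l =>
      by_cases hx : x ∈ y :: l
      · -- cut to the last occurrence... simpler: recurse on suffix starting at x
        obtain ⟨l₁, l₂, hdec⟩ := List.append_of_mem hx
        have hsuf : (x :: l₂) <:+ (x :: y :: l) := by
          rw [hdec]
          exact ⟨x :: l₁, by simp⟩
        have hch₂ : Chain' R (x :: l₂) := hch.suffix hsuf
        have hlen : (x :: l₂).length ≤ n := by
          have : (y :: l).length ≤ n := by simpa using hl
          rw [hdec] at this
          simp at this ⊢
          omega
        obtain ⟨q, hq1, hq2, hq3, hq4, hq5, hq6⟩ := ih (x :: l₂) hlen (by simp) hch₂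
        refine ⟨q, hq1, hq2, hq3, by simpa using hq4, ?_, fun z hz => ?_⟩
        · rw [hq5]
          have h1 : x :: y :: l = (x :: l₁) ++ (x :: l₂) := by rw [hdec]; rfl
          rw [h1, List.getLast?_append_of_ne_nil _ (by simp)]
        · exact hsuf.subset (hq6 z hz)
      · -- x ∉ y :: l : recurse on the tail
        have hch₂ : Chain' R (y :: l) := hch.tail
        obtain ⟨q, hq1, hq2, hq3, hq4, hq5, hq6⟩ := ih (y :: l) (by simpa using hl) (by simp) hch₂
        have hxq : x ∉ q := fun hmq => hx (hq6 x hmq)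
        refine ⟨x :: q, by simp, List.nodup_cons.2 ⟨hxq, hq2⟩, ?_, by simp, ?_, ?_⟩
        · rcases q with _ | ⟨a, q⟩
          · exact absurd rfl hq1
          · refine List.isChain_cons_cons.2 ⟨?_, hq3⟩
            have : a = y := by simpa using hq4
            rw [this]
            exact (List.isChain_cons_cons.1 hch).1
        · rcases q with _ | ⟨a, q⟩
          · exact absurd rfl hq1
          · rw [List.getLast?_cons_cons, hq5, List.getLast?_cons_cons]
        · intro z hz
          rcases List.mem_cons.1 hz with rfl | hz
          · simp
          · exact List.mem_cons_of_mem _ (hq6 z hz)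

section paths

variable {E : Finset (V × V)} {s t : V} [DecidableEq V]

theorem isPath_mono {E' : Finset (V × V)} (hEE : E ⊆ E') {p : List V}
    (hp : IsPath E s t p) : IsPath E' s t p :=
  ⟨hp.1, hp.2.1.imp (fun _ _ h => hEE h), hp.2.2⟩

theorem path_arcs_mem {p : List V} (hp : IsPath E s t p) {a : V × V}
    (ha : a ∈ pathArcs p) : a ∈ E := by
  have := (chain'_iff_arcs _ p).1 hp.2.1
  exact this a ha

theorem path_ne_nil {p : List V} (hp : IsPath E s t p) : p ≠ [] := by
  intro h; rw [h] at hp; simp [IsPath] at hp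

theorem path_cons {p : List V} (hp : IsPath E s t p) : ∃ l, p = s :: l := by
  rcases p with _ | ⟨a, l⟩
  · simp [IsPath] at hp
  · have : a = s := by simpa using hp.2.2.1
    exact ⟨l, by rw [this]⟩

theorem path_getLast {p : List V} (hp : IsPath E s t p) (h : p ≠ []) : p.getLast h = t := by
  have := hp.2.2.2
  rwa [List.getLast?_eq_getLast h, Option.some_inj] at this

theorem path_shape (hst : s ≠ t) (hA : (s, t) ∉ E) {p : List V} (hp : IsPath E s t p) :
    ∃ v l, p = s :: v :: l ∧ v ≠ s ∧ v ≠ t := by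
  obtain ⟨l, rfl⟩ := path_cons hp
  rcases l with _ | ⟨v, l⟩
  · exact absurd (by simpa [List.getLast?] using hp.2.2.2) hst
  · refine ⟨v, l, rfl, fun h => ?_, fun h => ?_⟩
    · rw [h] at hp; simpa using hp.1
    · subst h
      have hvl : v ∉ l := by have := hp.1; simp at this; tauto
      have : l = [] := by
        rcases l.eq_nil_or_concat with h | ⟨l', b, rfl⟩
        · exact h
        · exfalso
          have hb : b = v := by
            have := hp.2.2.2
            rw [show s :: v :: l'.concat b = (s :: v :: l') ++ [b] by simp,
              List.getLast?_concat] at this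
            simpa using this
          exact hvl (by simp [hb])
      subst this
      exact hA (path_arcs_mem hp (by simp [pathArcs]))

theorem path_two_le_length {p : List V} (hst : s ≠ t) (hp : IsPath E s t p) : 2 ≤ p.length := by
  obtain ⟨l, rfl⟩ := path_cons hp
  rcases l with _ | ⟨v, l⟩
  · exact absurd (by simpa [List.getLast?] using hp.2.2.2) hst
  · simp only [List.length_cons]; omega

theorem path_decomp (hst : s ≠ t) (hA : (s, t) ∉ E) {p : List V} (hp : IsPath E s t p) :
    ∃ l b, p = s :: l ++ [b, t] := by
  obtain ⟨v, l, rfl, hvs, hvt⟩ := path_shape hst hA hp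
  have hlne : l ≠ [] := by
    rintro rfl
    exact hvt (by simpa using hp.2.2.2)
  obtain ⟨l', b, c, hdec⟩ := two_decomp (v :: l)
    (by rcases l with _ | ⟨a, l⟩
        · exact absurd rfl hlne
        · simp only [List.length_cons]; omega)
  have hc : c = t := by
    have := hp.2.2.2
    rw [show s :: v :: l = s :: (v :: l) from rfl, hdec,
      show s :: (l' ++ [b, c]) = (s :: l' ++ [b]) ++ [c] by simp, List.getLast?_concat] at this
    simpa using this
  exact ⟨l', b, by rw [show s :: v :: l = s :: (v :: l) from rfl, hdec, hc]; simp⟩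

/-- targets of arcs in a nodup list starting with s differ from s -/
theorem arc_snd_ne_head {p : List V} {a : V × V} (hnd : p.Nodup) (hhd : p.head? = some s)
    (ha : a ∈ pathArcs p) : a.2 ≠ s := by
  intro h
  rcases p with _ | ⟨x, l⟩
  · simp [pathArcs] at ha
  · have hx : x = s := by simpa using hhd
    subst hx
    have := arc_snd_mem_tail ha
    rw [h] at this
    exact (List.nodup_cons.1 hnd).1 (by simpa using this)

theorem arc_fst_ne_last {p : List V} {a : V × V} (hnd : p.Nodup) (hlt : p.getLast? = some t)
    (ha : a ∈ pathArcs p) : a.1 ≠ t := by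
  intro h
  have hne : p ≠ [] := by rintro rfl; simp [pathArcs] at ha
  have hl : p.getLast hne = t := by rwa [List.getLast?_eq_getLast hne, Option.some_inj] at hlt
  have := arc_fst_mem_dropLast ha
  rw [h, ← hl] at this
  exact not_mem_dropLast_of_nodup hnd hne this

theorem arc_fst_ne_snd {p : List V} {a : V × V} (hnd : p.Nodup) (ha : a ∈ pathArcs p) :
    a.1 ≠ a.2 := by
  induction p with
  | nil => simp [pathArcs] at ha
  | cons x l ih =>
    match l, ha with
    | [], ha => simp [pathArcs] at ha
    | y :: l, ha =>
      rw [arcs_cons] at ha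
      rcases List.mem_cons.1 ha with ha | ha
      · rw [ha]
        intro h
        simp only at h
        exact (List.nodup_cons.1 hnd).1 (by simp [h])
      · exact ih (List.nodup_cons.1 hnd).2 ha

theorem mem_swap {a b : V} : (a, b) ∈ E.image Prod.swap ↔ (b, a) ∈ E := by
  constructor
  · intro h
    obtain ⟨e, he, heq⟩ := Finset.mem_image.1 h
    have : e = (b, a) := by
      rcases e with ⟨e1, e2⟩
      simp [Prod.swap, Prod.ext_iff] at heq
      simp [heq.1, heq.2, Prod.ext_iff]
    rwa [← this]
  · intro h
    exact Finset.mem_image.2 ⟨(b, a), h, rfl⟩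

theorem swap_swap_image : (E.image Prod.swap).image Prod.swap = E := by
  rw [Finset.image_image]
  have : Prod.swap ∘ Prod.swap = (id : V × V → V × V) := by
    funext e; simp
  rw [this, Finset.image_id]

theorem isPath_reverse {p : List V} (hp : IsPath E s t p) :
    IsPath (E.image Prod.swap) t s p.reverse := by
  refine ⟨List.nodup_reverse.2 hp.1, ?_, ?_, ?_⟩
  · simp only [List.Chain']; rw [List.isChain_reverse]
    exact hp.2.1.imp fun a b h => mem_swap.2 h
  · rw [List.head?_reverse]; exact hp.2.2.2
  · rw [List.getLast?_reverse]; exact hp.2.2.1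

theorem isPath_reverse_iff {p : List V} :
    IsPath (E.image Prod.swap) t s p.reverse ↔ IsPath E s t p := by
  constructor
  · intro h
    have := isPath_reverse h
    rwa [swap_swap_image, List.reverse_reverse] at this
  · exact isPath_reverse

end paths

section sep

variable [DecidableEq V]

/-- `W` is an s-t disconnecting node set -/
def Sep (E : Finset (V × V)) (s t : V) (W : Finset V) : Prop :=
  (∀ v ∈ W, v ≠ s ∧ v ≠ t) ∧ ∀ p : List V, IsPath E s t p → ∃ v ∈ W, v ∈ p

/-- vertices reachable from s avoiding W -/
def Rs (E : Finset (V × V)) (s : V) (W : Finset V) : Set V :=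
  {v | ∃ p : List V, p.Nodup ∧ p.Chain' (fun u v => (u, v) ∈ E) ∧ p.head? = some s ∧
    p.getLast? = some v ∧ ∀ x ∈ p, x ∉ W}

/-- vertices from which t is reachable avoiding W -/
def Rt (E : Finset (V × V)) (t : V) (W : Finset V) : Set V :=
  {v | ∃ p : List V, p.Nodup ∧ p.Chain' (fun u v => (u, v) ∈ E) ∧ p.head? = some v ∧
    p.getLast? = some t ∧ ∀ x ∈ p, x ∉ W}

variable {E : Finset (V × V)} {s t : V} {W : Finset V}

theorem sep_swap (h : Sep E s t W) : Sep (E.image Prod.swap) t s W := by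
  refine ⟨fun v hv => ⟨(h.1 v hv).2, (h.1 v hv).1⟩, fun q hq => ?_⟩
  have hq' : IsPath E s t q.reverse := by
    rw [← isPath_reverse_iff]
    rwa [List.reverse_reverse]
  obtain ⟨v, hv, hvq⟩ := h.2 q.reverse hq'
  exact ⟨v, hv, by simpa using hvq⟩

theorem sep_swap_iff : Sep (E.image Prod.swap) t s W ↔ Sep E s t W := by
  constructor
  · intro h
    have := sep_swap h
    rwa [swap_swap_image] at this
  · exact sep_swap

theorem s_mem_Rs (hs : s ∉ W) : s ∈ Rs E s W :=
  ⟨[s], by simp, by simp [List.Chain'], by simp, by simp [List.getLast?], by simpa⟩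

theorem mem_Rs_of_witness {q : List V} (hnd : q.Nodup)
    (hch : q.Chain' (fun u v => (u, v) ∈ E)) (hhd : q.head? = some s)
    (hav : ∀ x ∈ q, x ∉ W) {z : V} (hz : z ∈ q) : z ∈ Rs E s W := by
  obtain ⟨l₁, l₂, rfl⟩ := List.append_of_mem hz
  have hpre : (l₁ ++ [z]) <+: (l₁ ++ z :: l₂) := ⟨l₂, by simp⟩
  refine ⟨l₁ ++ [z], hpre.sublist.nodup hnd, hch.prefix hpre, ?_, List.getLast?_concat,
    fun x hx => hav x (hpre.sublist.subset hx)⟩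
  rcases hL : l₁ ++ [z] with _ | ⟨a, L⟩
  · simp at hL
  · have : l₁ ++ z :: l₂ = a :: (L ++ l₂) := by
      rw [show l₁ ++ z :: l₂ = (l₁ ++ [z]) ++ l₂ by simp, hL]; rfl
    rw [this] at hhd
    simpa using hhd

theorem t_not_mem_Rs (h : Sep E s t W) : t ∉ Rs E s W := by
  rintro ⟨p, hnd, hch, hhd, hlt, hav⟩
  obtain ⟨v, hv, hvp⟩ := h.2 p ⟨hnd, hch, hhd, hlt⟩
  exact hav v hvp hv

theorem not_mem_Rs_of_mem_W {v : V} (hv : v ∈ W) : v ∉ Rs E s W := by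
  rintro ⟨p, hnd, hch, hhd, hlt, hav⟩
  have hvp : v ∈ p := by
    have hne : p ≠ [] := by rintro rfl; simp at hlt
    have := List.getLast?_eq_getLast hne
    rw [this, Option.some_inj] at hlt
    rw [← hlt]; exact List.getLast_mem hne
  exact hav v hvp hv

theorem Rs_closure (h : Sep E s t W) {u v : V} (hu : u ∈ Rs E s W) (he : (u, v) ∈ E) :
    v ∈ Rs E s W ∨ v ∈ W := by
  by_cases hvW : v ∈ W
  · exact Or.inr hvW
  obtain ⟨p, hnd, hch, hhd, hlt, hav⟩ := hu
  by_cases hvp : v ∈ p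
  · exact Or.inl (mem_Rs_of_witness hnd hch hhd hav hvp)
  · refine Or.inl ⟨p ++ [v], ?_, ?_, ?_, List.getLast?_concat, ?_⟩
    · exact List.Nodup.append hnd (by simp) (by simp [List.disjoint_right, hvp])
    · simp only [List.Chain']; rw [List.isChain_append]
      refine ⟨hch, by simp, fun x hx y hy => ?_⟩
      rw [hlt, Option.mem_some_iff] at hx
      simp only [List.head?_cons, Option.mem_some_iff] at hy
      rw [← hx, ← hy]; exact he
    · have hne : p ≠ [] := by rintro rfl; simp at hhd
      rw [List.head?_append, hhd]; rfl
    · intro x hx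
      rcases List.mem_append.1 hx with hx | hx
      · exact hav x hx
      · simp at hx; rw [hx]; exact hvW

theorem rt_eq_rs_swap : Rt E t W = Rs (E.image Prod.swap) t W := by
  ext v
  constructor
  · rintro ⟨p, hnd, hch, hhd, hlt, hav⟩
    refine ⟨p.reverse, List.nodup_reverse.2 hnd, ?_, by rwa [List.head?_reverse],
      by rwa [List.getLast?_reverse], fun x hx => hav x (by simpa using hx)⟩
    simp only [List.Chain']; rw [List.isChain_reverse]
    exact hch.imp fun a b h => mem_swap.2 h
  · rintro ⟨p, hnd, hch, hhd, hlt, hav⟩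
    refine ⟨p.reverse, List.nodup_reverse.2 hnd, ?_, by rwa [List.head?_reverse],
      by rwa [List.getLast?_reverse], fun x hx => hav x (by simpa using hx)⟩
    simp only [List.Chain']; rw [List.isChain_reverse]
    exact hch.imp fun a b h => mem_swap.1 h

theorem rs_rt_disj (h : Sep E s t W) {v : V} (hv : v ∈ Rs E s W) (hv' : v ∈ Rt E t W) :
    False := by
  obtain ⟨p, hnd, hch, hhd, hlt, hav⟩ := hv
  obtain ⟨q, hnd', hch', hhd', hlt', hav'⟩ := hv'
  rcases q with _ | ⟨v', q'⟩
  · simp at hhd'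
  have hv'v : v' = v := by simpa using hhd'
  subst hv'v
  have hwalk : ∃ r : List V, r ≠ [] ∧ r.Chain' (fun u v => (u, v) ∈ E) ∧
      r.head? = some s ∧ r.getLast? = some t ∧ ∀ x ∈ r, x ∉ W := by
    refine ⟨p ++ q', ?_, ?_, ?_, ?_, ?_⟩
    · have : p ≠ [] := by rintro rfl; simp at hhd
      simp [this]
    · simp only [List.Chain']; rw [List.isChain_append]
      refine ⟨hch, hch'.tail, fun x hx y hy => ?_⟩
      rw [hlt, Option.mem_some_iff] at hx
      subst hx
      exact (List.isChain_cons.1 hch').1 y hy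
    · have hne : p ≠ [] := by rintro rfl; simp at hhd
      rw [List.head?_append, hhd]; rfl
    · rcases q' with _ | ⟨a, q''⟩
      · have : v' = t := by simpa using hlt'
        rw [← this]; simpa using hlt
      · rw [List.getLast?_append_of_ne_nil _ (by simp)]
        rw [List.getLast?_cons_cons] at hlt'
        exact hlt'
    · intro x hx
      rcases List.mem_append.1 hx with hx | hx
      · exact hav x hx
      · exact hav' x (List.mem_cons_of_mem _ hx)
  obtain ⟨r, hr1, hr2, hr3, hr4, hr5⟩ := hwalk
  obtain ⟨r', hr'1, hr'2, hr'3, hr'4, hr'5, hr'6⟩ :=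
    dedup_walk (fun u v => (u, v) ∈ E) r.length r le_rfl hr1 hr2
  obtain ⟨w, hwW, hwr⟩ := h.2 r' ⟨hr'2, hr'3, by rw [hr'4, hr3], by rw [hr'5, hr4]⟩
  exact hr5 w (hr'6 w hwr) hwW

theorem not_sep_elim (helems : ∀ v ∈ W, v ≠ s ∧ v ≠ t) (h : ¬ Sep E s t W) :
    ∃ p : List V, IsPath E s t p ∧ ∀ v ∈ W, v ∉ p := by
  rw [Sep, not_and] at h
  have := h helems
  push_neg at this
  obtain ⟨p, hp, hW⟩ := this
  exact ⟨p, hp, fun v hv hvp => hW v hv hvp⟩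

end sep

section es

variable [DecidableEq V]
variable {E : Finset (V × V)} {s t : V} {W : Finset V}

theorem not_mem_Rt_of_mem_W {v : V} (hv : v ∈ W) : v ∉ Rt E t W := by
  rintro ⟨p, hnd, hch, hhd, hlt, hav⟩
  have hvp : v ∈ p := by
    rcases p with _ | ⟨a, l⟩
    · simp at hhd
    · have : a = v := by simpa using hhd
      simp [this]
  exact hav v hvp hv

theorem z_exists (hW : Sep E s t W) (hmin : ∀ W', Sep E s t W' → W.card ≤ W'.card)
    {w : V} (hw : w ∈ W) : ∃ z, (w, z) ∈ E ∧ z ∈ Rt E t W := by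
  have hnotsep : ¬ Sep E s t (W.erase w) := by
    intro hsep
    have := hmin _ hsep
    rw [Finset.card_erase_of_mem hw] at this
    have hpos : 0 < W.card := Finset.card_pos.2 ⟨w, hw⟩
    omega
  obtain ⟨p, hp, hpav⟩ := not_sep_elim (fun v hv => hW.1 v (Finset.mem_of_mem_erase hv)) hnotsep
  obtain ⟨v, hvW, hvp⟩ := hW.2 p hp
  have hvw : v = w := by
    by_contra hne
    exact hpav v (Finset.mem_erase.2 ⟨hne, hvW⟩) hvp
  subst hvw
  obtain ⟨l₁, l₂, hdec⟩ := List.append_of_mem hvp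
  have hl₂ : l₂ ≠ [] := by
    rintro rfl
    have := hp.2.2.2
    rw [hdec, List.getLast?_append_of_ne_nil _ (by simp : [v] ≠ [])] at this
    exact (hW.1 v hvW).2 (by simpa using this)
  rcases l₂ with _ | ⟨z, l₂'⟩
  · exact absurd rfl hl₂
  have hsuf : (v :: z :: l₂') <:+ p := ⟨l₁, hdec.symm⟩
  have hchsuf := hp.2.1.suffix hsuf
  refine ⟨z, (List.isChain_cons_cons.1 hchsuf).1, z :: l₂', ?_, hchsuf.tail, by simp, ?_, ?_⟩
  · exact (hsuf.sublist.nodup hp.1).of_cons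
  · have := hp.2.2.2
    rw [hdec, List.getLast?_append_of_ne_nil _ (by simp), List.getLast?_cons_cons] at this
    exact this
  · intro x hx
    have hxp : x ∈ p := hsuf.subset (List.mem_cons_of_mem _ hx)
    intro hxW
    have hxv : x ≠ v := by
      intro hxveq
      have hvnotin : v ∉ z :: l₂' := (List.nodup_cons.1 (hsuf.sublist.nodup hp.1)).1
      rw [hxveq] at hx
      exact hvnotin hx
    exact hpav x (Finset.mem_erase.2 ⟨hxv, hxW⟩) hxp

open Classical in
/-- the s-side auxiliary digraph: arcs leaving `Rs`, plus an arc from each `w ∈ W` to `t` -/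
noncomputable def Es (E : Finset (V × V)) (s t : V) (W : Finset V) : Finset (V × V) :=
  E.filter (fun e => e.1 ∈ Rs E s W) ∪ W.image (fun w => (w, t))

theorem mem_Es {e : V × V} :
    e ∈ Es E s t W ↔ (e ∈ E ∧ e.1 ∈ Rs E s W) ∨ ∃ w ∈ W, e = (w, t) := by
  classical
  simp [Es, Finset.mem_union, Finset.mem_filter, Finset.mem_image, eq_comm]

theorem st_not_mem_Es (hW : Sep E s t W) (hA : (s, t) ∉ E) : (s, t) ∉ Es E s t W := by
  rw [mem_Es]
  rintro (⟨h, -⟩ | ⟨w, hw, h⟩)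
  · exact hA h
  · exact (hW.1 w hw).1 (by simpa [Prod.ext_iff, eq_comm] using h)

open Classical in
theorem card_Es (hW : Sep E s t W) :
    (Es E s t W).card = (E.filter (fun e => e.1 ∈ Rs E s W)).card + W.card := by
  rw [Es, Finset.card_union_of_disjoint, Finset.card_image_of_injective _
    (fun a b h => by simpa [Prod.ext_iff] using h)]
  rw [Finset.disjoint_left]
  intro e he hei
  obtain ⟨w, hw, rfl⟩ := Finset.mem_image.1 hei
  exact not_mem_Rs_of_mem_W hw (Finset.mem_filter.1 he).2

theorem first_hit (W : Finset V) :
    ∀ (p : List V), (∃ v ∈ W, v ∈ p) →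
      ∃ q w, (q ++ [w]) <+: p ∧ w ∈ W ∧ ∀ x ∈ q, x ∉ W := by
  intro p
  induction p with
  | nil => rintro ⟨v, -, h⟩; simp at h
  | cons x l ih =>
    intro hhit
    by_cases hx : x ∈ W
    · exact ⟨[], x, ⟨l, rfl⟩, hx, by simp⟩
    · obtain ⟨v, hvW, hvp⟩ := hhit
      have hvl : v ∈ l := by
        rcases List.mem_cons.1 hvp with rfl | h
        · exact absurd hvW hx
        · exact h
      obtain ⟨q, w, ⟨r, hr⟩, hwW, hq⟩ := ih ⟨v, hvW, hvl⟩
      refine ⟨x :: q, w, ⟨r, by rw [← hr]; rfl⟩, hwW, ?_⟩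
      intro z hz
      rcases List.mem_cons.1 hz with rfl | hz
      · exact hx
      · exact hq z hz

theorem sep_lift (hW : Sep E s t W) {W' : Finset V} (hW' : Sep (Es E s t W) s t W') :
    Sep E s t W' := by
  refine ⟨hW'.1, fun p hp => ?_⟩
  obtain ⟨q0, w, hpre0, hwW, hq0av⟩ := first_hit W p (hW.2 p hp)
  obtain ⟨r, hr⟩ := hpre0
  rcases q0 with _ | ⟨a, q0'⟩
  · exfalso
    have hhd : p.head? = some w := by rw [← hr]; rfl
    rw [hp.2.2.1] at hhd
    have hws : s = w := by simpa using hhd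
    exact (hW.1 w hwW).1 hws.symm
  have has : a = s := by
    have hhd : p.head? = some a := by rw [← hr]; rfl
    rw [hp.2.2.1] at hhd
    have : s = a := by simpa using hhd
    exact this.symm
  have hpre : ((a :: q0') ++ [w]) <+: p := ⟨r, hr⟩
  have hq0pre : (a :: q0') <+: p := ⟨[w] ++ r, by rw [← hr]; simp⟩
  have hq0Rs : ∀ z ∈ (a :: q0'), z ∈ Rs E s W :=
    fun z hz => mem_Rs_of_witness (hq0pre.sublist.nodup hp.1) (hp.2.1.prefix hq0pre)
      (by simp [has]) hq0av hz
  have htne : t ∉ (a :: q0') ++ [w] := by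
    intro ht
    have hpne : p ≠ [] := path_ne_nil hp
    have hgl : p.getLast hpne = t := path_getLast hp hpne
    have hdl : ∀ x ∈ (a :: q0'), x ∈ p.dropLast := by
      intro x hx
      rcases r with _ | ⟨b, r'⟩
      · have hpd : p.dropLast = (a :: q0') := by
          rw [← hr, List.append_nil, List.dropLast_concat]
        rw [hpd]; exact hx
      · have hpd : p.dropLast = ((a :: q0') ++ [w]) ++ (b :: r').dropLast := by
          conv_lhs => rw [← hr]
          rw [List.dropLast_append_of_ne_nil (by simp)]
        rw [hpd]
        exact List.mem_append.2 (Or.inl (List.mem_append.2 (Or.inl hx)))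
    rcases List.mem_append.1 ht with ht | ht
    · exact not_mem_dropLast_of_nodup hp.1 hpne (hgl ▸ hdl t ht)
    · have htw : t = w := by simpa using ht
      exact (hW.1 w hwW).2 htw.symm
  have harcs : ∀ x ∈ pathArcs ((a :: q0') ++ [w]), x ∈ Es E s t W := by
    intro x hx
    have hxE : x ∈ E := path_arcs_mem hp (arcs_prefix_subset hpre x hx)
    have hx1 : x.1 ∈ (a :: q0') := by
      have := arc_fst_mem_dropLast hx
      rwa [List.dropLast_concat] at this
    exact mem_Es.2 (Or.inl ⟨hxE, hq0Rs _ hx1⟩)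
  have hq : IsPath (Es E s t W) s t (((a :: q0') ++ [w]) ++ [t]) := by
    refine ⟨?_, ?_, ?_, List.getLast?_concat⟩
    · refine List.Nodup.append (hpre.sublist.nodup hp.1) (by simp) ?_
      intro x hx hxt
      rw [List.mem_singleton] at hxt
      rw [hxt] at hx
      exact htne hx
    · simp only [List.Chain']; rw [List.isChain_append]
      refine ⟨(chain'_iff_arcs _ _).2 harcs, by simp, fun x hx y hy => ?_⟩
      rw [List.getLast?_concat, Option.mem_some_iff] at hx
      simp only [List.head?_cons, Option.mem_some_iff] at hy
      subst hx; subst hy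
      exact mem_Es.2 (Or.inr ⟨w, hwW, rfl⟩)
    · show some a = some s
      rw [has]
  obtain ⟨v, hvW', hvq⟩ := hW'.2 _ hq
  refine ⟨v, hvW', ?_⟩
  rcases List.mem_append.1 hvq with hv | hv
  · exact hpre.sublist.subset hv
  · exact absurd (by simpa using hv) (hW'.1 v hvW').2

theorem struct (hW : Sep E s t W) (hst : s ≠ t) (hA : (s, t) ∉ E) {p : List V}
    (hp : IsPath (Es E s t W) s t p) :
    ∃ l w, p = s :: l ++ [w, t] ∧ w ∈ W ∧ ∀ v ∈ l, v ∈ Rs E s W ∧ v ∉ W := by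
  obtain ⟨l, b, hdec⟩ := path_decomp hst (st_not_mem_Es hW hA) hp
  have harc : (b, t) ∈ pathArcs p := by
    rw [hdec]
    exact arcs_suffix_subset (show [b, t] <:+ (s :: l) ++ [b, t] from ⟨s :: l, rfl⟩) _
      (by simp [pathArcs])
  have hbW : b ∈ W := by
    rcases mem_Es.1 (path_arcs_mem hp harc) with ⟨hE, hRs⟩ | ⟨w, hw, heq⟩
    · rcases Rs_closure hW hRs hE with h | h
      · exact absurd h (t_not_mem_Rs hW)
      · exact absurd rfl (hW.1 t h).2
    · have hbw : b = w := by simpa [Prod.ext_iff] using heq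
      rwa [← hbw] at hw
  refine ⟨l, b, hdec, hbW, fun v hv => ?_⟩
  -- v ∈ l is not t
  have hpne : p ≠ [] := path_ne_nil hp
  have hdl : p.dropLast = s :: l ++ [b] := by
    rw [hdec, show (s :: l ++ [b, t]) = (s :: l ++ [b]) ++ [t] by simp, List.dropLast_concat]
  have hvdl : v ∈ p.dropLast := by rw [hdl]; simp [hv]
  have hvt : v ≠ t := by
    rintro rfl
    exact not_mem_dropLast_of_nodup hp.1 hpne (path_getLast hp hpne ▸ hvdl)
  have hvW : v ∉ W := by
    intro hvW
    obtain ⟨z, hz⟩ := exists_arc_of_mem_dropLast hvdl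
    rcases mem_Es.1 (path_arcs_mem hp hz) with ⟨-, hRs⟩ | ⟨w, -, heq⟩
    · exact not_mem_Rs_of_mem_W hvW hRs
    · -- z = t, so v is the unique in-neighbour of t on p, i.e. v = b
      obtain ⟨-, hzt⟩ : v = w ∧ z = t := by simpa [Prod.ext_iff] using heq
      rw [hzt] at hz
      have hvb : v = b := arcs_target_inj hp.1 hz harc
      have hbl : b ∉ l := by
        have hnd := hp.1
        rw [hdec] at hnd
        have h2 : (l ++ [b, t]).Nodup := (List.nodup_cons.1 hnd).2
        have h3 := List.nodup_append.1 h2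
        exact fun hvl => h3.2.2 _ hvl _ (by simp) rfl
      rw [hvb] at hv
      exact hbl hv
  -- v gets an incoming arc, so v ∈ Rs ∪ W, and v ∉ W
  have hvtail : v ∈ p.tail := by rw [hdec]; simp [hv]
  obtain ⟨u, hu⟩ := exists_arc_of_mem_tail hvtail
  rcases mem_Es.1 (path_arcs_mem hp hu) with ⟨hE, hRs⟩ | ⟨w, -, heq⟩
  · rcases Rs_closure hW hRs hE with h | h
    · exact ⟨h, hvW⟩
    · exact absurd h hvW
  · obtain ⟨-, hvteq⟩ : u = w ∧ v = t := by simpa [Prod.ext_iff] using heq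
    exact absurd hvteq hvt

open Classical in
theorem degS (hW : Sep E s t W) (hmin : ∀ W', Sep E s t W' → W.card ≤ W'.card)
    (hb : (E.filter (fun e => e.1 ∉ Rs E s W)).card ≤ W.card) :
    (∀ e ∈ E, e.1 ∉ Rs E s W → e.1 ∈ W ∧ e.2 = t) ∧ ∀ w ∈ W, (w, t) ∈ E := by
  set g : V → V × V := fun w =>
    if h : ∃ z, (w, z) ∈ E ∧ z ∈ Rt E t W then (w, h.choose) else (w, t) with hgdef
  have hgW : ∀ w ∈ W, (g w).1 = w ∧ (g w).2 ∈ Rt E t W ∧ g w ∈ E := by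
    intro w hw
    have h := z_exists hW hmin hw
    have hgw : g w = (w, h.choose) := by simp only [hgdef]; exact dif_pos h
    rw [hgw]
    exact ⟨rfl, h.choose_spec.2, h.choose_spec.1⟩
  have himg : W.image g ⊆ E.filter (fun e => e.1 ∉ Rs E s W) := by
    intro e he
    obtain ⟨w, hw, rfl⟩ := Finset.mem_image.1 he
    obtain ⟨h1, h2, h3⟩ := hgW w hw
    exact Finset.mem_filter.2 ⟨h3, by rw [h1]; exact not_mem_Rs_of_mem_W hw⟩
  have hcardimg : (W.image g).card = W.card := by
    apply Finset.card_image_of_injOn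
    intro a ha b hb hab
    have := congrArg Prod.fst hab
    rwa [(hgW a ha).1, (hgW b hb).1] at this
  have heq : W.image g = E.filter (fun e => e.1 ∉ Rs E s W) :=
    Finset.eq_of_subset_of_card_le himg (by rw [hcardimg]; exact hb)
  -- all the z_w equal t
  have hzt : ∀ w ∈ W, (g w).2 = t := by
    intro w hw
    by_contra hne
    obtain ⟨h1, h2, h3⟩ := hgW w hw
    obtain ⟨q, hqnd, hqch, hqhd, hqlt, hqav⟩ := h2
    rcases q with _ | ⟨z, q'⟩
    · simp at hqhd
    have hz : z = (g w).2 := by simpa using hqhd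
    rcases q' with _ | ⟨c, q''⟩
    · exact hne (by rw [← hz]; simpa using hqlt)
    have hzc : (z, c) ∈ E := (List.isChain_cons_cons.1 hqch).1
    have hzRt : z ∈ Rt E t W := ⟨z :: c :: q'', hqnd, hqch, by simp, hqlt, hqav⟩
    have hzmem : (z, c) ∈ E.filter (fun e => e.1 ∉ Rs E s W) :=
      Finset.mem_filter.2 ⟨hzc, fun hRs => rs_rt_disj hW hRs hzRt⟩
    rw [← heq] at hzmem
    obtain ⟨w', hw', hw'eq⟩ := Finset.mem_image.1 hzmem
    have : z = w' := by
      have := congrArg Prod.fst hw'eq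
      rw [(hgW w' hw').1] at this
      exact this.symm
    rw [this] at hzRt
    exact not_mem_Rt_of_mem_W hw' hzRt
  constructor
  · intro e he hRs
    have : e ∈ W.image g := by rw [heq]; exact Finset.mem_filter.2 ⟨he, hRs⟩
    obtain ⟨w, hw, rfl⟩ := Finset.mem_image.1 this
    rw [(hgW w hw).1]
    exact ⟨hw, hzt w hw⟩
  · intro w hw
    have h3 := (hgW w hw).2.2
    have : g w = (w, t) := by
      have h1 := (hgW w hw).1
      have h2 := hzt w hw
      rcases hg : g w with ⟨a, b⟩
      rw [hg] at h1 h2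
      simp at h1 h2
      rw [h1, h2]
    rwa [this] at h3

end es

section glue

variable [DecidableEq V]
variable {E : Finset (V × V)} {s t : V} {W : Finset V}

theorem s_not_mem_Rt (hW : Sep E s t W) : s ∉ Rt E t W := by
  rintro ⟨p, hnd, hch, hhd, hlt, hav⟩
  obtain ⟨v, hv, hvp⟩ := hW.2 p ⟨hnd, hch, hhd, hlt⟩
  exact hav v hvp hv

theorem struct_unique (hW : Sep E s t W) (hst : s ≠ t) (hA : (s, t) ∉ E) {p : List V}
    (hp : IsPath (Es E s t W) s t p) :
    ∃ w ∈ W, w ∈ p ∧ ∀ w' ∈ W, w' ∈ p → w' = w := by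
  obtain ⟨l, w₀, hdec, hw₀, hl⟩ := struct hW hst hA hp
  refine ⟨w₀, hw₀, by rw [hdec]; simp, fun w' hw' hw'p => ?_⟩
  rw [hdec] at hw'p
  rcases List.mem_cons.1 hw'p with rfl | h
  · exact absurd rfl (hW.1 w' hw').1
  rcases List.mem_append.1 h with h | h
  · exact absurd hw' ((hl w' h).2)
  rcases List.mem_cons.1 h with rfl | h
  · rfl
  · exact absurd (by simpa using h) (hW.1 w' hw').2

theorem fan_cover {D : Finset (V × V)} {F : Finset (List V)}
    (hfam : IsNodeDisjointFamily D s t F) (hcard : F.card = W.card)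
    (helem : ∀ v ∈ W, v ≠ s ∧ v ≠ t)
    (hstruct : ∀ p ∈ F, ∃ w ∈ W, w ∈ p ∧ ∀ w' ∈ W, w' ∈ p → w' = w) :
    ∀ w ∈ W, ∃ p ∈ F, w ∈ p ∧ ∀ w' ∈ W, w' ∈ p → w' = w := by
  classical
  set f : List V → V := fun p => if h : ∃ w, w ∈ W ∧ w ∈ p then h.choose else s with hfdef
  have hfp : ∀ p ∈ F, f p ∈ W ∧ f p ∈ p ∧ ∀ w' ∈ W, w' ∈ p → w' = f p := by
    intro p hp
    obtain ⟨w₀, hw₀, hw₀p, huni⟩ := hstruct p hp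
    have h : ∃ w, w ∈ W ∧ w ∈ p := ⟨w₀, hw₀, hw₀p⟩
    have hfP : f p = h.choose := by simp only [hfdef]; exact dif_pos h
    have h1 := h.choose_spec.1
    have h2 := h.choose_spec.2
    rw [← hfP] at h1 h2
    exact ⟨h1, h2, fun w' hw' hw'p => by
      rw [huni w' hw' hw'p, huni (f p) h1 h2]⟩
  have himg : F.image f ⊆ W := by
    intro v hv
    obtain ⟨p, hp, rfl⟩ := Finset.mem_image.1 hv
    exact (hfp p hp).1
  have hinj : (F.image f).card = F.card := by
    apply Finset.card_image_of_injOn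
    intro p hp p' hp' hff
    by_contra hne
    have h1 := (hfp p hp)
    have h2 := (hfp p' hp')
    have hv := hfam.2 hp hp' hne (f p) h1.2.1 (hff ▸ h2.2.1)
    rcases hv with hv | hv
    · exact (helem (f p) h1.1).1 hv
    · exact (helem (f p) h1.1).2 hv
  have heq : F.image f = W :=
    Finset.eq_of_subset_of_card_le himg (by rw [hinj, hcard])
  intro w hw
  rw [← heq] at hw
  obtain ⟨p, hp, hfpw⟩ := Finset.mem_image.1 hw
  obtain ⟨h1, h2, h3⟩ := hfp p hp
  refine ⟨p, hp, by rw [← hfpw]; exact h2, fun w' hw' hw'p => by rw [← hfpw]; exact h3 w' hw' hw'p⟩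

end glue

section gluemain

variable [DecidableEq V]
variable {E : Finset (V × V)} {s t : V} {W : Finset V}

open Classical in
theorem glue_lemma {n : ℕ} (hst : s ≠ t) (hA : (s, t) ∉ E)
    (hW : Sep E s t W) (hmin : ∀ W', Sep E s t W' → W.card ≤ W'.card)
    (hbS : (Es E s t W).card < n)
    (hbT : (Es (E.image Prod.swap) t s W).card < n)
    (IH : ∀ (E' : Finset (V × V)) (s' t' : V), E'.card < n → s' ≠ t' → (s', t') ∉ E' →
      (∀ W', Sep E' s' t' W' → W.card ≤ W'.card) →
      ∃ P : Finset (List V), P.card = W.card ∧ IsNodeDisjointFamily E' s' t' P) :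
    ∃ P : Finset (List V), P.card = W.card ∧ IsNodeDisjointFamily E s t P := by
  have hWT : Sep (E.image Prod.swap) t s W := sep_swap hW
  have hminT : ∀ W', Sep (E.image Prod.swap) t s W' → W.card ≤ W'.card :=
    fun W' h => hmin W' (sep_swap_iff.1 h)
  have hAT : (t, s) ∉ E.image Prod.swap := fun h => hA (mem_swap.1 h)
  obtain ⟨Fs, hFscard, hFsfam⟩ := IH (Es E s t W) s t hbS hst (st_not_mem_Es hW hA)
    (fun W' h => hmin W' (sep_lift hW h))
  obtain ⟨Ft, hFtcard, hFtfam⟩ := IH (Es (E.image Prod.swap) t s W) t s hbT hst.symm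
    (st_not_mem_Es hWT hAT) (fun W' h => hminT W' (sep_lift hWT h))
  have hsW : s ∉ W := fun h => (hW.1 s h).1 rfl
  have htW : t ∉ W := fun h => (hW.1 t h).2 rfl
  have htRs : t ∉ Rs E s W := t_not_mem_Rs hW
  have hsRsT : s ∉ Rs (E.image Prod.swap) t W := by
    rw [← rt_eq_rs_swap]
    exact s_not_mem_Rt hW
  have hdisjR : ∀ v : V, v ∈ Rs E s W → v ∈ Rs (E.image Prod.swap) t W → False := by
    intro v h1 h2
    rw [← rt_eq_rs_swap] at h2
    exact rs_rt_disj hW h1 h2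
  have hWnotRs : ∀ w ∈ W, w ∉ Rs E s W := fun w hw => not_mem_Rs_of_mem_W hw
  have hWnotRsT : ∀ w ∈ W, w ∉ Rs (E.image Prod.swap) t W := fun w hw => not_mem_Rs_of_mem_W hw
  have hcoverS := fan_cover hFsfam hFscard hW.1
    (fun p hp => struct_unique hW hst hA (hFsfam.1 p hp))
  have hcoverT := fan_cover hFtfam hFtcard hWT.1
    (fun q hq => struct_unique hWT hst.symm hAT (hFtfam.1 q hq))
  set pOf : V → List V := fun w =>
    if h : ∃ p ∈ Fs, w ∈ p ∧ ∀ w' ∈ W, w' ∈ p → w' = w then h.choose else [] with hpOfdef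
  set qOf : V → List V := fun w =>
    if h : ∃ q ∈ Ft, w ∈ q ∧ ∀ w' ∈ W, w' ∈ q → w' = w then h.choose else [] with hqOfdef
  have hpOf : ∀ w ∈ W, pOf w ∈ Fs ∧ w ∈ pOf w ∧ ∀ w' ∈ W, w' ∈ pOf w → w' = w := by
    intro w hw
    have h := hcoverS w hw
    have heq : pOf w = h.choose := by simp only [hpOfdef]; exact dif_pos h
    rw [heq]
    exact ⟨h.choose_spec.1, h.choose_spec.2.1, h.choose_spec.2.2⟩
  have hqOf : ∀ w ∈ W, qOf w ∈ Ft ∧ w ∈ qOf w ∧ ∀ w' ∈ W, w' ∈ qOf w → w' = w := by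
    intro w hw
    have h := hcoverT w hw
    have heq : qOf w = h.choose := by simp only [hqOfdef]; exact dif_pos h
    rw [heq]
    exact ⟨h.choose_spec.1, h.choose_spec.2.1, h.choose_spec.2.2⟩
  have hdecS : ∀ w ∈ W, ∃ l, pOf w = s :: l ++ [w, t] ∧
      ∀ v ∈ l, v ∈ Rs E s W ∧ v ∉ W := by
    intro w hw
    obtain ⟨l, w₀, hdec, hw₀, hl⟩ := struct hW hst hA (hFsfam.1 _ (hpOf w hw).1)
    have hww₀ : w₀ = w := (hpOf w hw).2.2 w₀ hw₀ (by rw [hdec]; simp)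
    rw [hww₀] at hdec
    exact ⟨l, hdec, hl⟩
  have hdecT : ∀ w ∈ W, ∃ l, qOf w = t :: l ++ [w, s] ∧
      ∀ v ∈ l, v ∈ Rs (E.image Prod.swap) t W ∧ v ∉ W := by
    intro w hw
    obtain ⟨l, w₀, hdec, hw₀, hl⟩ := struct hWT hst.symm hAT (hFtfam.1 _ (hqOf w hw).1)
    have hww₀ : w₀ = w := (hqOf w hw).2.2 w₀ hw₀ (by rw [hdec]; simp)
    rw [hww₀] at hdec
    exact ⟨l, hdec, hl⟩
  set glueF : V → List V := fun w => (pOf w).dropLast ++ (qOf w).reverse.tail.tail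
    with hgluedef
  have hglue : ∀ w l l', pOf w = s :: l ++ [w, t] → qOf w = t :: l' ++ [w, s] →
      glueF w = (s :: l ++ [w]) ++ (l'.reverse ++ [t]) := by
    intro w l l' hP hQ
    simp only [hgluedef]
    rw [hP, hQ]
    congr 1
    · rw [show s :: l ++ [w, t] = (s :: l ++ [w]) ++ [t] by simp, List.dropLast_concat]
    · simp
  -- each glued list is a path
  have hpath : ∀ w ∈ W, IsPath E s t (glueF w) := by
    intro w hw
    obtain ⟨l, hP, hl⟩ := hdecS w hw
    obtain ⟨l', hQ, hl'⟩ := hdecT w hw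
    have hPpath := hFsfam.1 _ (hpOf w hw).1
    have hQpath := hFtfam.1 _ (hqOf w hw).1
    rw [hglue w l l' hP hQ]
    have hpre1 : (s :: l ++ [w]) <+: pOf w := ⟨[t], by rw [hP]; simp⟩
    have harc1 : ∀ a ∈ pathArcs (s :: l ++ [w]), (a.1, a.2) ∈ E := by
      intro a ha
      have haEs := path_arcs_mem hPpath (arcs_prefix_subset hpre1 a ha)
      rcases mem_Es.1 haEs with ⟨hE, -⟩ | ⟨w', -, heq⟩
      · simpa using hE
      · exfalso
        have h2 : a.2 = t := by rw [heq]
        have hmem2 := arc_snd_mem_tail ha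
        rw [h2] at hmem2
        have hmem3 : t ∈ l ++ [w] := by simpa using hmem2
        rcases List.mem_append.1 hmem3 with h | h
        · exact htRs (hl t h).1
        · have htw : t = w := by simpa using h
          exact (hW.1 w hw).2 htw.symm
    have hchain1 : List.Chain' (fun u v => (u, v) ∈ E) (s :: l ++ [w]) :=
      (chain'_iff_arcs _ _).2 harc1
    have hpre2 : (t :: l' ++ [w]) <+: qOf w := ⟨[s], by rw [hQ]; simp⟩
    have harc2 : ∀ a ∈ pathArcs (t :: l' ++ [w]), (a.1, a.2) ∈ E.image Prod.swap := by
      intro a ha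
      have haEs := path_arcs_mem hQpath (arcs_prefix_subset hpre2 a ha)
      rcases mem_Es.1 haEs with ⟨hE, -⟩ | ⟨w', -, heq⟩
      · simpa using hE
      · exfalso
        have h2 : a.2 = s := by rw [heq]
        have hmem2 := arc_snd_mem_tail ha
        rw [h2] at hmem2
        have hmem3 : s ∈ l' ++ [w] := by simpa using hmem2
        rcases List.mem_append.1 hmem3 with h | h
        · exact hsRsT (hl' s h).1
        · have hsw : s = w := by simpa using h
          exact (hW.1 w hw).1 hsw.symm
    have hchain2 : List.Chain' (fun u v => (u, v) ∈ E) (w :: (l'.reverse ++ [t])) := by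
      have hrev2 : (t :: l' ++ [w]).reverse = w :: (l'.reverse ++ [t]) := by simp
      rw [← hrev2]; simp only [List.Chain']; rw [List.isChain_reverse]
      refine (chain'_iff_arcs _ _).2 (fun a ha => ?_)
      exact mem_swap.1 (harc2 a ha)
    have hchain : List.Chain' (fun u v => (u, v) ∈ E)
        ((s :: l ++ [w]) ++ (l'.reverse ++ [t])) := by
      simp only [List.Chain']; rw [List.isChain_append]
      refine ⟨hchain1, hchain2.tail, fun x hx y hy => ?_⟩
      rw [show s :: l ++ [w] = (s :: l) ++ [w] from rfl, List.getLast?_concat,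
        Option.mem_some_iff] at hx
      subst hx
      exact (List.isChain_cons.1 hchain2).1 y hy
    have hnd1 : (s :: l ++ [w]).Nodup := hpre1.sublist.nodup hPpath.1
    have hnd2 : (l'.reverse ++ [t]).Nodup := by
      have hpre : (t :: l') <+: qOf w := ⟨[w, s], by rw [hQ]⟩
      have h1 : (t :: l').Nodup := hpre.sublist.nodup hQpath.1
      have h2 := List.nodup_reverse.2 h1
      simpa using h2
    have hdisj : List.Disjoint (s :: l ++ [w]) (l'.reverse ++ [t]) := by
      intro a ha1 ha2
      have ha1' : a = s ∨ a ∈ l ∨ a = w := by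
        rcases List.mem_append.1 ha1 with h | h
        · rcases List.mem_cons.1 h with h | h
          · exact Or.inl h
          · exact Or.inr (Or.inl h)
        · exact Or.inr (Or.inr (by simpa using h))
      have ha2' : a ∈ l' ∨ a = t := by
        rcases List.mem_append.1 ha2 with h | h
        · exact Or.inl (List.mem_reverse.1 h)
        · exact Or.inr (by simpa using h)
      rcases ha1' with rfl | h1 | rfl
      · rcases ha2' with h2 | rfl
        · exact hsRsT (hl' a h2).1
        · exact hst rfl
      · rcases ha2' with h2 | rfl
        · exact hdisjR a (hl a h1).1 (hl' a h2).1
        · exact htRs (hl a h1).1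
      · rcases ha2' with h2 | rfl
        · exact hWnotRsT a hw (hl' a h2).1
        · exact htW hw
    refine ⟨List.Nodup.append hnd1 hnd2 hdisj, hchain, ?_, ?_⟩
    · rfl
    · rw [show (s :: l ++ [w]) ++ (l'.reverse ++ [t]) =
        ((s :: l ++ [w]) ++ l'.reverse) ++ [t] by simp, List.getLast?_concat]
  -- the family
  have hwmemglue : ∀ w, ∀ l l', pOf w = s :: l ++ [w, t] → qOf w = t :: l' ++ [w, s] →
      w ∈ glueF w := by
    intro w l l' hP hQ
    rw [hglue w l l' hP hQ]
    simp
  have hmemcases : ∀ w ∈ W, ∀ v ∈ glueF w, ∀ l l',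
      pOf w = s :: l ++ [w, t] → qOf w = t :: l' ++ [w, s] →
      v = s ∨ v ∈ l ∨ v = w ∨ v ∈ l' ∨ v = t := by
    intro w hw v hv l l' hP hQ
    rw [hglue w l l' hP hQ] at hv
    rcases List.mem_append.1 hv with h | h
    · rcases List.mem_append.1 h with h | h
      · rcases List.mem_cons.1 h with h | h
        · exact Or.inl h
        · exact Or.inr (Or.inl h)
      · exact Or.inr (Or.inr (Or.inl (by simpa using h)))
    · rcases List.mem_append.1 h with h | h
      · exact Or.inr (Or.inr (Or.inr (Or.inl (List.mem_reverse.1 h))))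
      · exact Or.inr (Or.inr (Or.inr (Or.inr (by simpa using h))))
  have hglue_inj : ∀ w ∈ W, ∀ w' ∈ W, glueF w = glueF w' → w = w' := by
    intro w hw w' hw' heq
    by_contra hne
    obtain ⟨l, hP, hl⟩ := hdecS w hw
    obtain ⟨l', hQ, hl'⟩ := hdecT w hw
    obtain ⟨m, hP', hm⟩ := hdecS w' hw'
    obtain ⟨m', hQ', hm'⟩ := hdecT w' hw'
    have hwmem : w ∈ glueF w' := heq ▸ hwmemglue w l l' hP hQ
    rcases hmemcases w' hw' w hwmem m m' hP' hQ' with h | h | h | h | h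
    · exact (hW.1 w hw).1 h
    · exact hWnotRs w hw (hm w h).1
    · exact hne h
    · exact hWnotRsT w hw (hm' w h).1
    · exact (hW.1 w hw).2 h
  refine ⟨W.image glueF, ?_, ?_, ?_⟩
  · rw [Finset.card_image_of_injOn (fun w hw w' hw' heq =>
      hglue_inj w (Finset.mem_coe.1 hw) w' (Finset.mem_coe.1 hw') heq)]
  · intro p hp
    obtain ⟨w, hw, rfl⟩ := Finset.mem_image.1 hp
    exact hpath w hw
  · intro p hp q hq hne v hvp hvq
    rw [Finset.coe_image] at hp hq
    obtain ⟨w, hw, rfl⟩ := hp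
    obtain ⟨w', hw', rfl⟩ := hq
    rw [Finset.mem_coe] at hw hw'
    have hww' : w ≠ w' := fun h => hne (by rw [h])
    by_cases hvs : v = s
    · exact Or.inl hvs
    by_cases hvt : v = t
    · exact Or.inr hvt
    exfalso
    obtain ⟨l, hP, hl⟩ := hdecS w hw
    obtain ⟨l', hQ, hl'⟩ := hdecT w hw
    obtain ⟨m, hP', hm⟩ := hdecS w' hw'
    obtain ⟨m', hQ', hm'⟩ := hdecT w' hw'
    have hv1 := hmemcases w hw v hvp l l' hP hQ
    have hv2 := hmemcases w' hw' v hvq m m' hP' hQ'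
    rcases hv1 with h1 | h1 | rfl | h1 | h1
    · exact hvs h1
    · -- v ∈ l : v is an internal s-side vertex of pOf w
      rcases hv2 with h2 | h2 | rfl | h2 | h2
      · exact hvs h2
      · -- v ∈ m : common vertex of pOf w and pOf w'
        have hvP : v ∈ pOf w := by rw [hP]; simp [h1]
        have hvP' : v ∈ pOf w' := by rw [hP']; simp [h2]
        by_cases hpp : pOf w = pOf w'
        · have : w' ∈ pOf w := by rw [hpp]; exact (hpOf w' hw').2.1
          exact hww' ((hpOf w hw).2.2 w' hw' this).symm
        · rcases hFsfam.2 (Finset.mem_coe.2 (hpOf w hw).1)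
            (Finset.mem_coe.2 (hpOf w' hw').1) hpp v hvP hvP' with h | h
          · exact hvs h
          · exact hvt h
      · exact hWnotRs v hw' (hl v h1).1
      · exact hdisjR v (hl v h1).1 (hm' v h2).1
      · exact hvt h2
    · -- v = w
      rcases hv2 with h2 | h2 | h2 | h2 | h2
      · exact hvs h2
      · exact hWnotRs v hw (hm v h2).1
      · exact hww' h2
      · exact hWnotRsT v hw (hm' v h2).1
      · exact hvt h2
    · -- v ∈ l'
      rcases hv2 with h2 | h2 | rfl | h2 | h2
      · exact hvs h2
      · exact hdisjR v (hm v h2).1 (hl' v h1).1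
      · exact hWnotRsT v hw' (hl' v h1).1
      · -- v ∈ m' : common vertex of qOf w and qOf w'
        have hvQ : v ∈ qOf w := by rw [hQ]; simp [h1]
        have hvQ' : v ∈ qOf w' := by rw [hQ']; simp [h2]
        by_cases hqq : qOf w = qOf w'
        · have : w' ∈ qOf w := by rw [hqq]; exact (hqOf w' hw').2.1
          exact hww' ((hqOf w hw).2.2 w' hw' this).symm
        · rcases hFtfam.2 (Finset.mem_coe.2 (hqOf w hw).1)
            (Finset.mem_coe.2 (hqOf w' hw').1) hqq v hvQ hvQ' with h | h
          · exact hvt h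
          · exact hvs h
      · exact hvt h2
    · exact hvt h1

end gluemain

section core

variable [Fintype V] [DecidableEq V]

open Classical in
theorem core (n : ℕ) :
    ∀ (E : Finset (V × V)) (s t : V), E.card = n → s ≠ t → (s, t) ∉ E →
      ∀ k : ℕ, (∀ W : Finset V, Sep E s t W → k ≤ W.card) →
      ∃ P : Finset (List V), P.card = k ∧ IsNodeDisjointFamily E s t P := by
  induction n using Nat.strong_induction_on with
  | _ n IH =>
  intro E s t hEcard hst hA k hk
  have IH' : ∀ (E' : Finset (V × V)), E'.card < n → ∀ s' t' : V, s' ≠ t' → (s', t') ∉ E' →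
      ∀ k : ℕ, (∀ W : Finset V, Sep E' s' t' W → k ≤ W.card) →
      ∃ P : Finset (List V), P.card = k ∧ IsNodeDisjointFamily E' s' t' P :=
    fun E' hlt s' t' h2 h3 k' hk' => IH E'.card hlt E' s' t' rfl h2 h3 k' hk'
  -- Step 1 : cleaning
  by_cases hEE : E.filter (fun e => e.1 ≠ e.2 ∧ e.2 ≠ s ∧ e.1 ≠ t) = E
  case neg =>
    set E' := E.filter (fun e => e.1 ≠ e.2 ∧ e.2 ≠ s ∧ e.1 ≠ t) with hE'def
    have hpaths : ∀ p, IsPath E s t p → IsPath E' s t p := by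
      intro p hp
      refine ⟨hp.1, (chain'_iff_arcs _ _).2 (fun a ha => ?_), hp.2.2⟩
      refine Finset.mem_filter.2 ⟨path_arcs_mem hp ha, arc_fst_ne_snd hp.1 ha,
        arc_snd_ne_head hp.1 hp.2.2.1 ha, arc_fst_ne_last hp.1 hp.2.2.2 ha⟩
    have hlt : E'.card < n := by
      rw [← hEcard]
      exact Finset.card_lt_card (Finset.ssubset_iff_subset_ne.2 ⟨Finset.filter_subset _ _, hEE⟩)
    obtain ⟨P, hPc, hPfam⟩ := IH' E' hlt s t hst
      (fun h => hA (Finset.filter_subset _ _ h)) k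
      (fun W hsep => hk W ⟨hsep.1, fun p hp => hsep.2 p (hpaths p hp)⟩)
    exact ⟨P, hPc, fun p hp => isPath_mono (Finset.filter_subset _ _) (hPfam.1 p hp), hPfam.2⟩
  case pos =>
  have hclean : ∀ e ∈ E, e.1 ≠ e.2 ∧ e.2 ≠ s ∧ e.1 ≠ t := by
    intro e he
    rw [← hEE] at he
    exact (Finset.mem_filter.1 he).2
  -- Step 2 : minimum separator
  have hWfull : Sep E s t (Finset.univ.filter (fun v => v ≠ s ∧ v ≠ t)) := by
    refine ⟨fun v hv => (Finset.mem_filter.1 hv).2, fun p hp => ?_⟩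
    obtain ⟨v, l, hdec, hvs, hvt⟩ := path_shape hst hA hp
    exact ⟨v, Finset.mem_filter.2 ⟨Finset.mem_univ _, hvs, hvt⟩, by rw [hdec]; simp⟩
  have hSne : Set.Nonempty {m | ∃ W : Finset V, Sep E s t W ∧ W.card = m} :=
    ⟨_, _, hWfull, rfl⟩
  set k₀ := sInf {m | ∃ W : Finset V, Sep E s t W ∧ W.card = m} with hk₀def
  obtain ⟨W₀, hW₀sep, hW₀card⟩ := Nat.sInf_mem hSne
  have hmin : ∀ W', Sep E s t W' → k₀ ≤ W'.card := fun W' h => Nat.sInf_le ⟨W', h, rfl⟩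
  have hkk₀ : k ≤ k₀ := by rw [hk₀def, ← hW₀card]; exact hk W₀ hW₀sep
  suffices h : ∃ P : Finset (List V), P.card = k₀ ∧ IsNodeDisjointFamily E s t P by
    obtain ⟨P, hPcard, hPfam⟩ := h
    obtain ⟨P', hP'sub, hP'card⟩ := Finset.exists_subset_card_eq (hPcard ▸ hkk₀)
    exact ⟨P', hP'card, fun p hp => hPfam.1 p (hP'sub hp),
      hPfam.2.mono (Finset.coe_subset.2 hP'sub)⟩
  clear hk hkk₀ k
  by_cases hk₀0 : k₀ = 0
  · refine ⟨∅, by simp [hk₀0], by simp, by simp⟩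
  -- Step 3 : base case, every arc leaves s or enters t
  by_cases hbase : ∀ e ∈ E, e.1 = s ∨ e.2 = t
  · set Wb := Finset.univ.filter (fun w => (s, w) ∈ E ∧ (w, t) ∈ E) with hWbdef
    have hWbsep : Sep E s t Wb := by
      refine ⟨fun v hv => ?_, fun p hp => ?_⟩
      · obtain ⟨h1, h2⟩ := (Finset.mem_filter.1 hv).2
        exact ⟨fun h => (hclean _ h1).1 (by rw [h]), fun h => hA (h ▸ h1)⟩
      · obtain ⟨v, l, hdec, hvs, hvt⟩ := path_shape hst hA hp
        have hsv : (s, v) ∈ E := path_arcs_mem hp (by rw [hdec, arcs_cons]; simp)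
        rcases hL : l with _ | ⟨c, l₂⟩
        · exfalso
          rw [hL] at hdec
          have := hp.2.2.2
          rw [hdec] at this
          exact hvt (by simpa [List.getLast?] using this)
        · have hvc : (v, c) ∈ E := by
            refine path_arcs_mem hp ?_
            rw [hdec, hL, arcs_cons]
            exact List.mem_cons_of_mem _ (by rw [arcs_cons]; simp)
          rcases hbase (v, c) hvc with h | h
          · exact absurd h hvs
          · have hct : c = t := h
            have hvtE : (v, t) ∈ E := by rwa [hct] at hvc
            exact ⟨v, Finset.mem_filter.2 ⟨Finset.mem_univ _, hsv, hvtE⟩, by rw [hdec]; simp⟩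
    obtain ⟨Wc, hWcsub, hWccard⟩ := Finset.exists_subset_card_eq (hmin _ hWbsep)
    have hWcprop : ∀ w ∈ Wc, (s, w) ∈ E ∧ (w, t) ∈ E ∧ w ≠ s ∧ w ≠ t := by
      intro w hw
      obtain ⟨h1, h2⟩ := (Finset.mem_filter.1 (hWcsub hw)).2
      exact ⟨h1, h2, fun h => (hclean _ h1).1 (by rw [h]), fun h => hA (h ▸ h1)⟩
    refine ⟨Wc.image (fun w => [s, w, t]), ?_, ?_, ?_⟩
    · rw [Finset.card_image_of_injOn (fun a _ b _ h => by simpa using h), hWccard]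
    · intro p hp
      obtain ⟨w, hw, rfl⟩ := Finset.mem_image.1 hp
      obtain ⟨h1, h2, h3, h4⟩ := hWcprop w hw
      have hsw : s ≠ w := fun h => h3 h.symm
      refine ⟨by simp [hst, h4, hsw], ?_, rfl, by simp⟩
      simp only [List.Chain']; rw [List.isChain_cons_cons, List.isChain_cons_cons]
      exact ⟨h1, h2, by simp⟩
    · intro a ha b hb hne v hva hvb
      rw [Finset.coe_image] at ha hb
      obtain ⟨w, hw, rfl⟩ := ha
      obtain ⟨w', hw', rfl⟩ := hb
      obtain ⟨-, -, h3, h4⟩ := hWcprop w (Finset.mem_coe.1 hw)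
      obtain ⟨-, -, h3', h4'⟩ := hWcprop w' (Finset.mem_coe.1 hw')
      have hww' : w ≠ w' := fun h => hne (by rw [h])
      simp only [List.mem_cons, List.mem_singleton, List.not_mem_nil, or_false] at hva hvb
      rcases hva with rfl | rfl | rfl
      · exact Or.inl rfl
      · rcases hvb with h | h | h
        · exact absurd h h3
        · exact absurd h hww'
        · exact absurd h h4
      · exact Or.inr rfl
  -- Step 4 : pick an arc (x, y) with x ≠ s, y ≠ t and delete it
  push_neg at hbase
  obtain ⟨⟨x, y⟩, hxyE, hxs, hyt⟩ := hbase
  have hE₁card : (E.erase (x, y)).card < n := by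
    rw [← hEcard]
    exact Finset.card_erase_lt_of_mem hxyE
  by_cases h₁ : ∀ W', Sep (E.erase (x, y)) s t W' → k₀ ≤ W'.card
  · obtain ⟨P, hPc, hPfam⟩ := IH' (E.erase (x, y)) hE₁card s t hst
      (fun h => hA (Finset.erase_subset _ _ h)) k₀ h₁
    exact ⟨P, hPc, fun p hp => isPath_mono (Finset.erase_subset _ _) (hPfam.1 p hp), hPfam.2⟩
  push_neg at h₁
  obtain ⟨Y, hYsep, hYlt⟩ := h₁
  have hYel := hYsep.1
  have hforce : ∀ p, IsPath E s t p → (∀ v ∈ Y, v ∉ p) → x ∈ p ∧ y ∈ p := by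
    intro p hp hav
    by_cases hall : ∀ a ∈ pathArcs p, a ∈ E.erase (x, y)
    · have hp₁ : IsPath (E.erase (x, y)) s t p :=
        ⟨hp.1, (chain'_iff_arcs _ _).2 hall, hp.2.2⟩
      obtain ⟨v, hvY, hvp⟩ := hYsep.2 p hp₁
      exact absurd hvp (hav v hvY)
    · push_neg at hall
      obtain ⟨a, ha, hanot⟩ := hall
      have haxy : a = (x, y) := by
        by_contra hne
        exact hanot (Finset.mem_erase.2 ⟨hne, path_arcs_mem hp ha⟩)
      rw [haxy] at ha
      exact ⟨arc_fst_mem ha, arc_snd_mem ha⟩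
  have hxt : x ≠ t := (hclean _ hxyE).2.2
  have hys : y ≠ s := (hclean _ hxyE).2.1
  have hW₁sep : Sep E s t (insert x Y) := by
    refine ⟨fun v hv => ?_, fun p hp => ?_⟩
    · rcases Finset.mem_insert.1 hv with rfl | hv
      · exact ⟨hxs, hxt⟩
      · exact hYel v hv
    · by_cases hYp : ∃ v ∈ Y, v ∈ p
      · obtain ⟨v, h1, h2⟩ := hYp
        exact ⟨v, Finset.mem_insert_of_mem h1, h2⟩
      · push_neg at hYp
        exact ⟨x, Finset.mem_insert_self _ _, (hforce p hp hYp).1⟩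
  have hW₂sep : Sep E s t (insert y Y) := by
    refine ⟨fun v hv => ?_, fun p hp => ?_⟩
    · rcases Finset.mem_insert.1 hv with rfl | hv
      · exact ⟨hys, hyt⟩
      · exact hYel v hv
    · by_cases hYp : ∃ v ∈ Y, v ∈ p
      · obtain ⟨v, h1, h2⟩ := hYp
        exact ⟨v, Finset.mem_insert_of_mem h1, h2⟩
      · push_neg at hYp
        exact ⟨y, Finset.mem_insert_self _ _, (hforce p hp hYp).2⟩
  have hYcard : Y.card = k₀ - 1 := by
    have h1 : k₀ ≤ (insert x Y).card := hmin _ hW₁sep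
    have h2 : (insert x Y).card ≤ Y.card + 1 := Finset.card_insert_le _ _
    omega
  have hxY : x ∉ Y := by
    intro hxY
    have := hmin _ hW₁sep
    rw [Finset.insert_eq_self.2 hxY] at this
    omega
  have hyY : y ∉ Y := by
    intro hyY
    have := hmin _ hW₂sep
    rw [Finset.insert_eq_self.2 hyY] at this
    omega
  have hW₁card : (insert x Y).card = k₀ := by
    rw [Finset.card_insert_of_notMem hxY, hYcard]
    omega
  have hW₂card : (insert y Y).card = k₀ := by
    rw [Finset.card_insert_of_notMem hyY, hYcard]
    omega
  -- edge-count bookkeeping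
  have hETcard : (E.image Prod.swap).card = n := by
    rw [Finset.card_image_of_injective _ Prod.swap_injective, hEcard]
  have hEsltS : ∀ W : Finset V, Sep E s t W → W.card = k₀ →
      k₀ + 1 ≤ (E.filter (fun e => e.1 ∉ Rs E s W)).card → (Es E s t W).card < n := by
    intro W hWsep hWc hb
    have hsum := Finset.card_filter_add_card_filter_not
      (s := E) (p := fun e => e.1 ∈ Rs E s W)
    rw [hEcard] at hsum
    rw [card_Es hWsep, hWc]
    omega
  have hEsltT : ∀ W : Finset V, Sep E s t W → W.card = k₀ →
      k₀ + 1 ≤ ((E.image Prod.swap).filter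
        (fun e => e.1 ∉ Rs (E.image Prod.swap) t W)).card →
      (Es (E.image Prod.swap) t s W).card < n := by
    intro W hWsep hWc hb
    have hsum := Finset.card_filter_add_card_filter_not
      (s := E.image Prod.swap) (p := fun e => e.1 ∈ Rs (E.image Prod.swap) t W)
    rw [hETcard] at hsum
    rw [card_Es (sep_swap hWsep), hWc]
    omega
  -- Step 5 : branch on degeneracy
  by_cases h₂ : k₀ + 1 ≤ (E.filter (fun e => e.1 ∉ Rs E s (insert y Y))).card
  · -- use W₂ = insert y Y for the glue
    have hmin₂ : ∀ W', Sep E s t W' → (insert y Y).card ≤ W'.card :=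
      fun W' h => hW₂card ▸ hmin W' h
    have h₂T : k₀ + 1 ≤ ((E.image Prod.swap).filter
        (fun e => e.1 ∉ Rs (E.image Prod.swap) t (insert y Y))).card := by
      by_contra hcon
      push_neg at hcon
      obtain ⟨hdeg1, -⟩ := degS (sep_swap hW₂sep)
        (fun W' h => hW₂card ▸ hmin W' (sep_swap_iff.1 h))
        (by rw [hW₂card]; exact Nat.lt_succ_iff.1 hcon)
      have := hdeg1 (y, x) (mem_swap.2 hxyE)
        (not_mem_Rs_of_mem_W (Finset.mem_insert_self y Y))
      exact hxs this.2
    obtain ⟨P, hPc, hPf⟩ := glue_lemma hst hA hW₂sep hmin₂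
      (hEsltS _ hW₂sep hW₂card h₂) (hEsltT _ hW₂sep hW₂card h₂T)
      (fun E' s' t' h1 h2 h3 h4 => IH' E' h1 s' t' h2 h3 (insert y Y).card h4)
    exact ⟨P, by rw [hPc, hW₂card], hPf⟩
  · push_neg at h₂
    obtain ⟨hdegS1, hdegS2⟩ := degS hW₂sep (fun W' h => hW₂card ▸ hmin W' h)
      (by rw [hW₂card]; exact Nat.lt_succ_iff.1 h₂)
    by_cases h₃ : k₀ + 1 ≤ ((E.image Prod.swap).filter
        (fun e => e.1 ∉ Rs (E.image Prod.swap) t (insert x Y))).card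
    · -- use W₁ = insert x Y for the glue
      have hmin₁ : ∀ W', Sep E s t W' → (insert x Y).card ≤ W'.card :=
        fun W' h => hW₁card ▸ hmin W' h
      have h₃S : k₀ + 1 ≤ (E.filter (fun e => e.1 ∉ Rs E s (insert x Y))).card := by
        by_contra hcon
        push_neg at hcon
        obtain ⟨hdeg1, -⟩ := degS hW₁sep (fun W' h => hW₁card ▸ hmin W' h)
          (by rw [hW₁card]; exact Nat.lt_succ_iff.1 hcon)
        have := hdeg1 (x, y) hxyE (not_mem_Rs_of_mem_W (Finset.mem_insert_self x Y))
        exact hyt this.2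
      obtain ⟨P, hPc, hPf⟩ := glue_lemma hst hA hW₁sep hmin₁
        (hEsltS _ hW₁sep hW₁card h₃S) (hEsltT _ hW₁sep hW₁card h₃)
        (fun E' s' t' h1 h2 h3 h4 => IH' E' h1 s' t' h2 h3 (insert x Y).card h4)
      exact ⟨P, by rw [hPc, hW₁card], hPf⟩
    · -- doubly degenerate : direct construction
      push_neg at h₃
      obtain ⟨-, hdegT2⟩ := degS (sep_swap hW₁sep)
        (fun W' h => hW₁card ▸ hmin W' (sep_swap_iff.1 h))
        (by rw [hW₁card]; exact Nat.lt_succ_iff.1 h₃)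
      -- for every a ∈ Y : (s, a) ∈ E and (a, t) ∈ E
      have hsa : ∀ a ∈ Y, (s, a) ∈ E := fun a ha =>
        mem_swap.1 (hdegT2 a (Finset.mem_insert_of_mem ha))
      have hat : ∀ a ∈ Y, (a, t) ∈ E := fun a ha =>
        hdegS2 a (Finset.mem_insert_of_mem ha)
      have hYnotsep : ¬ Sep E s t Y := by
        intro h
        have := hmin Y h
        omega
      obtain ⟨p, hppath, hpav⟩ := not_sep_elim hYel hYnotsep
      have hxp : x ∈ p := (hforce p hppath hpav).1
      have hpnot : p ∉ Y.image (fun a => [s, a, t]) := by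
        intro hmem
        obtain ⟨a, ha, heq⟩ := Finset.mem_image.1 hmem
        rw [← heq] at hxp
        simp only [List.mem_cons, List.mem_singleton, List.not_mem_nil, or_false] at hxp
        rcases hxp with h | h | h
        · exact hxs h
        · exact hxY (h ▸ ha)
        · exact hxt h
      refine ⟨insert p (Y.image (fun a => [s, a, t])), ?_, ?_, ?_⟩
      · rw [Finset.card_insert_of_notMem hpnot,
          Finset.card_image_of_injOn (fun a _ b _ h => by simpa using h), hYcard]
        omega
      · intro q hq
        rcases Finset.mem_insert.1 hq with rfl | hq
        · exact hppath
        · obtain ⟨a, ha, rfl⟩ := Finset.mem_image.1 hq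
          have h1 := (hYel a ha).1
          have h2 := (hYel a ha).2
          have hsa' : s ≠ a := fun h => h1 h.symm
          refine ⟨by simp [hst, h2, hsa'], ?_, rfl, by simp⟩
          simp only [List.Chain']; rw [List.isChain_cons_cons, List.isChain_cons_cons]
          exact ⟨hsa a ha, hat a ha, by simp⟩
      · intro q1 hq1 q2 hq2 hne v hv1 hv2
        simp only [Finset.coe_insert, Set.mem_insert_iff, Finset.coe_image,
          Set.mem_image, Finset.mem_coe] at hq1 hq2
        rcases hq1 with rfl | ⟨a, ha, rfl⟩ <;> rcases hq2 with rfl | ⟨b, hb, rfl⟩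
        · exact absurd rfl hne
        · simp only [List.mem_cons, List.mem_singleton, List.not_mem_nil, or_false] at hv2
          rcases hv2 with rfl | rfl | rfl
          · exact Or.inl rfl
          · exact absurd hv1 (hpav v hb)
          · exact Or.inr rfl
        · simp only [List.mem_cons, List.mem_singleton, List.not_mem_nil, or_false] at hv1
          rcases hv1 with rfl | rfl | rfl
          · exact Or.inl rfl
          · exact absurd hv2 (hpav v ha)
          · exact Or.inr rfl
        · have hab : a ≠ b := fun h => hne (by rw [h])
          simp only [List.mem_cons, List.mem_singleton, List.not_mem_nil, or_false]
            at hv1 hv2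
          rcases hv1 with rfl | rfl | rfl
          · exact Or.inl rfl
          · rcases hv2 with h | h | h
            · exact absurd h (hYel v ha).1
            · exact absurd h hab
            · exact absurd h (hYel v ha).2
          · exact Or.inr rfl

end core

end MengerAux

open MengerAux in
theorem menger_node_disjoint' {V : Type*} [Fintype V] [DecidableEq V]
    (E : Finset (V × V)) (s t : V) (hst : s ≠ t) (hA : (s, t) ∉ E) :
    ∃ k : ℕ,
      IsGreatest {n | ∃ P : Finset (List V), P.card = n ∧ IsNodeDisjointFamily E s t P} k ∧
      IsLeast {n | ∃ W : Finset V, W.card = n ∧ (∀ v ∈ W, v ≠ s ∧ v ≠ t) ∧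
        ∀ p : List V, IsPath E s t p → ∃ v ∈ W, v ∈ p} k := by
  classical
  have hWfull : Sep E s t (Finset.univ.filter (fun v => v ≠ s ∧ v ≠ t)) := by
    refine ⟨fun v hv => (Finset.mem_filter.1 hv).2, fun p hp => ?_⟩
    obtain ⟨v, l, hdec, hvs, hvt⟩ := path_shape hst hA hp
    exact ⟨v, Finset.mem_filter.2 ⟨Finset.mem_univ _, hvs, hvt⟩, by rw [hdec]; simp⟩
  set S : Set ℕ := {n | ∃ W : Finset V, W.card = n ∧ (∀ v ∈ W, v ≠ s ∧ v ≠ t) ∧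
    ∀ p : List V, IsPath E s t p → ∃ v ∈ W, v ∈ p} with hSdef
  have hSsep : ∀ {m : ℕ}, m ∈ S ↔ ∃ W : Finset V, W.card = m ∧ Sep E s t W := by
    intro m
    constructor
    · rintro ⟨W, h1, h2, h3⟩; exact ⟨W, h1, h2, h3⟩
    · rintro ⟨W, h1, h2, h3⟩; exact ⟨W, h1, h2, h3⟩
  have hne : S.Nonempty := ⟨_, _, rfl, hWfull.1, hWfull.2⟩
  refine ⟨sInf S, ⟨?_, ?_⟩, Nat.sInf_mem hne, fun m hm => Nat.sInf_le hm⟩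
  · -- a family of size sInf S exists
    obtain ⟨P, hPc, hPfam⟩ := core E.card E s t rfl hst hA (sInf S)
      (fun W hsep => Nat.sInf_le (hSsep.2 ⟨W, rfl, hsep⟩))
    exact ⟨P, hPc, hPfam⟩
  · -- any family is at most as large as the minimum separator
    rintro m ⟨P, hPcard, hPfam⟩
    obtain ⟨W₀, hW₀card, hW₀el, hW₀hits⟩ := Nat.sInf_mem hne
    rw [← hPcard, ← hW₀card]
    set f : List V → V := fun p => if h : ∃ v ∈ W₀, v ∈ p then h.choose else s with hfdef
    have hfmem : ∀ p ∈ P, f p ∈ W₀ ∧ f p ∈ p := by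
      intro p hp
      have h := hW₀hits p (hPfam.1 p hp)
      have heq : f p = h.choose := by simp only [hfdef]; exact dif_pos h
      rw [heq]
      exact ⟨h.choose_spec.1, h.choose_spec.2⟩
    apply Finset.card_le_card_of_injOn f (fun p hp => (hfmem p hp).1)
    intro p hp p' hp' hff
    by_contra hne'
    have h1 := hfmem p (Finset.mem_coe.1 hp)
    have h2 := hfmem p' (Finset.mem_coe.1 hp')
    rcases hPfam.2 hp hp' hne' (f p) h1.2 (hff ▸ h2.2) with h | h
    · exact (hW₀el (f p) h1.1).1 h
    · exact (hW₀el (f p) h1.1).2 h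

/-- **Menger's theorem.** In a finite digraph with `s ≠ t` and `(s, t) ∉ E`, the maximum
cardinality of a set of pairwise internally node-disjoint directed paths from `s` to `t`
equals the minimum cardinality of an `s`–`t` disconnecting node set. -/
theorem menger_node_disjoint {V : Type*} [Fintype V] [DecidableEq V]
    (E : Finset (V × V)) (s t : V) (hst : s ≠ t) (hA : (s, t) ∉ E) :
    ∃ k : ℕ,
      IsGreatest {n | ∃ P : Finset (List V), P.card = n ∧ IsNodeDisjointFamily E s t P} k ∧
      IsLeast {n | ∃ W : Finset V, W.card = n ∧ (∀ v ∈ W, v ≠ s ∧ v ≠ t) ∧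
        ∀ p : List V, IsPath E s t p → ∃ v ∈ W, v ∈ p} k := by
  exact menger_node_disjoint' E s t hst hA
end

section
/- Let G = (V, E) be a finite digraph, s, t ∈ V with s ≠ t, and let P be a set of k pairwise edge-disjoint directed paths from s to t. If there exists a directed path from s to t in the residual digraph of G with respect to P (an augmenting path), then there exists a set of k + 1 pairwise edge-disjoint directed paths from s to t in G. -/
/-- The flow-arcs: arcs used by some path of `P`. -/
def flowArcs {V : Type*} [DecidableEq V] (P : Finset (List V)) : Finset (V × V) :=
  P.biUnion (fun p => (pathArcs p).toFinset)

/-- The arc set of the residualArcs digraph of `E` with respect to the path set `P`: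
all arcs of `E` that are not flow-arcs, together with the reversals of all flow-arcs. -/
def residualArcs {V : Type*} [DecidableEq V] (E : Finset (V × V)) (P : Finset (List V)) :
    Finset (V × V) :=
  (E \ flowArcs P) ∪ (flowArcs P).image (fun a => (a.2, a.1))



set_option linter.unusedSectionVars false
namespace AugAux
variable {V : Type*} [DecidableEq V]

/-- out-degree minus in-degree of `v` in arc set `F`, as an integer. -/
def deg (F : Finset (V × V)) (v : V) : ℤ :=
  ((F.filter (fun a => a.1 = v)).card : ℤ) - ((F.filter (fun a => a.2 = v)).card : ℤ)

lemma filter_sdiff' {α : Type*} [DecidableEq α] (F X : Finset α) (p : α → Prop)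
    [DecidablePred p] : (F \ X).filter p = F.filter p \ X.filter p := by
  ext a; simp only [Finset.mem_filter, Finset.mem_sdiff]; tauto

lemma deg_sdiff {F X : Finset (V × V)} (h : X ⊆ F) (v : V) :
    deg (F \ X) v = deg F v - deg X v := by
  unfold deg
  rw [filter_sdiff', filter_sdiff',
    Finset.card_sdiff_of_subset (Finset.filter_subset_filter _ h),
    Finset.card_sdiff_of_subset (Finset.filter_subset_filter _ h),
    Nat.cast_sub (Finset.card_le_card (Finset.filter_subset_filter _ h)),
    Nat.cast_sub (Finset.card_le_card (Finset.filter_subset_filter _ h))]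
  ring

lemma deg_union {F X : Finset (V × V)} (h : Disjoint F X) (v : V) :
    deg (F ∪ X) v = deg F v + deg X v := by
  unfold deg
  rw [Finset.filter_union, Finset.filter_union,
    Finset.card_union_of_disjoint (Finset.disjoint_filter_filter h),
    Finset.card_union_of_disjoint (Finset.disjoint_filter_filter h)]
  push_cast; ring

lemma deg_biUnion {ι : Type*} [DecidableEq ι] {P : Finset ι} {f : ι → Finset (V × V)}
    (h : ∀ p ∈ P, ∀ q ∈ P, p ≠ q → Disjoint (f p) (f q)) (v : V) :
    deg (P.biUnion f) v = ∑ p ∈ P, deg (f p) v := by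
  unfold deg
  rw [Finset.filter_biUnion, Finset.filter_biUnion,
    Finset.card_biUnion (fun p hp q hq hpq => Finset.disjoint_filter_filter (h p hp q hq hpq)),
    Finset.card_biUnion (fun p hp q hq hpq => Finset.disjoint_filter_filter (h p hp q hq hpq))]
  push_cast
  rw [Finset.sum_sub_distrib]

lemma deg_image_swap (X : Finset (V × V)) (v : V) :
    deg (X.image (fun a => (a.2, a.1))) v = - deg X v := by
  have hinj : Function.Injective (fun a : V × V => (a.2, a.1)) := by
    intro a b h; simpa [Prod.ext_iff, and_comm] using h
  unfold deg
  rw [Finset.filter_image, Finset.filter_image,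
    Finset.card_image_of_injective _ hinj, Finset.card_image_of_injective _ hinj]
  ring

lemma deg_singleton (a : V × V) (v : V) :
    deg {a} v = (if a.1 = v then 1 else 0) - (if a.2 = v then 1 else 0) := by
  unfold deg
  rw [Finset.filter_singleton, Finset.filter_singleton]
  split <;> split <;> simp

/- pathArcs lemmas -/
lemma pathArcs_cons_cons (a b : V) (l : List V) :
    pathArcs (a :: b :: l) = (a, b) :: pathArcs (b :: l) := rfl

lemma map_fst_pathArcs : ∀ (p : List V), (pathArcs p).map Prod.fst = p.dropLast
  | [] => rfl
  | [_] => rfl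
  | a :: b :: l => by
      rw [pathArcs_cons_cons, List.map_cons, map_fst_pathArcs (b :: l)]
      rfl

lemma map_snd_pathArcs : ∀ (p : List V), (pathArcs p).map Prod.snd = p.tail
  | [] => rfl
  | [_] => rfl
  | a :: b :: l => by
      rw [pathArcs_cons_cons, List.map_cons, map_snd_pathArcs (b :: l)]
      rfl

lemma pathArcs_nodup {p : List V} (h : p.Nodup) : (pathArcs p).Nodup := by
  apply List.Nodup.of_map Prod.fst
  rw [map_fst_pathArcs]
  exact h.sublist (List.dropLast_sublist p)

lemma chain'_of_pathArcs {R : V → V → Prop} :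
    ∀ {p : List V}, p.Chain' R → ∀ a ∈ pathArcs p, R a.1 a.2
  | [], _, a, ha => by simp [pathArcs] at ha
  | [_], _, a, ha => by simp [pathArcs] at ha
  | x :: y :: l, h, a, ha => by
      rw [pathArcs_cons_cons] at ha
      unfold List.Chain' at h
      rw [List.isChain_cons_cons] at h
      rcases List.mem_cons.mp ha with ha | ha
      · subst ha; exact h.1
      · exact chain'_of_pathArcs h.2 a ha

end AugAux

namespace AugAux
variable {V : Type*} [DecidableEq V]

lemma length_filter_eq {v : V} : ∀ (m : List V), m.Nodup →
    (m.filter (fun x => x = v)).length = if v ∈ m then 1 else 0 := by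
  intro m hm
  induction m with
  | nil => simp
  | cons x l ih =>
    rw [List.nodup_cons] at hm
    by_cases hxv : x = v
    · subst hxv
      simp [List.filter_cons, hm.1, ih hm.2]
    · simp [List.filter_cons, hxv, ih hm.2, Ne.symm hxv]

lemma card_filter_fst {p : List V} (hp : p.Nodup) (v : V) :
    ((pathArcs p).toFinset.filter (fun a => a.1 = v)).card
      = if v ∈ p.dropLast then 1 else 0 := by
  have h1 : (pathArcs p).toFinset.filter (fun a => a.1 = v)
      = ((pathArcs p).filter (fun a => a.1 = v)).toFinset := by
    rw [List.toFinset_filter]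
    apply Finset.filter_congr
    intro a _; simp
  rw [h1, List.toFinset_card_of_nodup ((pathArcs_nodup hp).filter _)]
  have h2 : ((pathArcs p).filter (fun a => a.1 = v)).length
      = (((pathArcs p).map Prod.fst).filter (fun x => x = v)).length := by
    rw [List.filter_map]
    simp only [List.length_map]
    congr 1
  rw [h2, map_fst_pathArcs]
  exact length_filter_eq _ (hp.sublist (List.dropLast_sublist p))

lemma card_filter_snd {p : List V} (hp : p.Nodup) (v : V) :
    ((pathArcs p).toFinset.filter (fun a => a.2 = v)).card
      = if v ∈ p.tail then 1 else 0 := by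
  have h1 : (pathArcs p).toFinset.filter (fun a => a.2 = v)
      = ((pathArcs p).filter (fun a => a.2 = v)).toFinset := by
    rw [List.toFinset_filter]
    apply Finset.filter_congr
    intro a _; simp
  rw [h1, List.toFinset_card_of_nodup ((pathArcs_nodup hp).filter _)]
  have h2 : ((pathArcs p).filter (fun a => a.2 = v)).length
      = (((pathArcs p).map Prod.snd).filter (fun x => x = v)).length := by
    rw [List.filter_map]
    simp only [List.length_map]
    congr 1
  rw [h2, map_snd_pathArcs]
  exact length_filter_eq _ (hp.sublist (List.tail_sublist p))

lemma deg_pathArcs {p : List V} (hp : p.Nodup) (v : V) :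
    deg (pathArcs p).toFinset v
      = (if v ∈ p.dropLast then 1 else 0) - (if v ∈ p.tail then 1 else 0) := by
  unfold deg
  rw [card_filter_fst hp, card_filter_snd hp]
  split <;> split <;> simp

lemma mem_dropLast_iff {p : List V} {t v : V} (hn : p.Nodup) (hl : p.getLast? = some t) :
    v ∈ p.dropLast ↔ v ∈ p ∧ v ≠ t := by
  have hne : p ≠ [] := by rintro rfl; simp at hl
  have hlast : p.getLast hne = t := (List.getLast?_eq_getLast (l := p) hne ▸ hl : _) |> Option.some.inj
  have hsplit := List.dropLast_append_getLast hne
  constructor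
  · intro hv
    have hvp : v ∈ p := by rw [← hsplit]; exact List.mem_append_left _ hv
    refine ⟨hvp, fun hvt => ?_⟩
    subst hvt
    rw [← hsplit, hlast] at hn
    exact (List.disjoint_of_nodup_append hn) hv (by simp)
  · rintro ⟨hvp, hvt⟩
    rw [← hsplit] at hvp
    rcases List.mem_append.mp hvp with h | h
    · exact h
    · simp [hlast] at h; exact absurd h hvt

lemma mem_tail_iff {p : List V} {s v : V} (hn : p.Nodup) (hh : p.head? = some s) :
    v ∈ p.tail ↔ v ∈ p ∧ v ≠ s := by
  rcases p with _ | ⟨x, l⟩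
  · simp at hh
  · have hx : x = s := by simpa using hh
    subst hx
    rw [List.nodup_cons] at hn
    simp only [List.tail_cons, List.mem_cons]
    constructor
    · intro hv
      exact ⟨Or.inr hv, fun h => hn.1 (h ▸ hv)⟩
    · rintro ⟨hv | hv, hvs⟩
      · exact absurd hv hvs
      · exact hv

lemma deg_pathArcs_head {p : List V} {s t : V} (hn : p.Nodup)
    (hh : p.head? = some s) (hl : p.getLast? = some t) (hst : s ≠ t) :
    deg (pathArcs p).toFinset s = 1 := by
  have hsp : s ∈ p := by
    rcases p with _ | ⟨x, l⟩; · simp at hh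
    · simp_all
  rw [deg_pathArcs hn, if_pos ((mem_dropLast_iff hn hl).mpr ⟨hsp, hst⟩),
    if_neg (fun h => ((mem_tail_iff hn hh).mp h).2 rfl)]
  norm_num

lemma deg_pathArcs_other {p : List V} {s t v : V} (hn : p.Nodup)
    (hh : p.head? = some s) (hl : p.getLast? = some t) (hvs : v ≠ s) (hvt : v ≠ t) :
    deg (pathArcs p).toFinset v = 0 := by
  by_cases hv : v ∈ p
  · rw [deg_pathArcs hn, if_pos ((mem_dropLast_iff hn hl).mpr ⟨hv, hvt⟩),
      if_pos ((mem_tail_iff hn hh).mpr ⟨hv, hvs⟩)]; ring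
  · rw [deg_pathArcs hn, if_neg (fun h => hv ((mem_dropLast_iff hn hl).mp h).1),
      if_neg (fun h => hv ((mem_tail_iff hn hh).mp h).1)]; ring

end AugAux

namespace AugAux
variable {V : Type*} [DecidableEq V]

lemma exists_dup_split {p : List V} (h : ¬ p.Nodup) :
    ∃ (a : List V) (v : V) (b c : List V), p = a ++ v :: (b ++ v :: c) := by
  induction p with
  | nil => simp at h
  | cons x l ih =>
    by_cases hx : x ∈ l
    · obtain ⟨b, c, rfl⟩ := List.append_of_mem hx
      exact ⟨[], x, b, c, rfl⟩
    · have hl : ¬ l.Nodup := fun hn => h (List.nodup_cons.mpr ⟨hx, hn⟩)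
      obtain ⟨a, v, b, c, rfl⟩ := ih hl
      exact ⟨x :: a, v, b, c, rfl⟩

lemma walk_to_path {R : V → V → Prop} {x t : V} :
    ∀ (n : ℕ) (l : List V), l.length ≤ n → l.Chain' R → l.head? = some x →
      l.getLast? = some t →
      ∃ p : List V, p.Nodup ∧ p.Chain' R ∧ p.head? = some x ∧ p.getLast? = some t := by
  intro n
  induction n with
  | zero =>
    intro l hlen _ hh _
    have : l = [] := List.eq_nil_of_length_eq_zero (Nat.le_zero.mp hlen)
    subst this; simp at hh
  | succ n ih =>
    intro l hlen hc hh hl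
    by_cases hnd : l.Nodup
    · exact ⟨l, hnd, hc, hh, hl⟩
    · obtain ⟨a, v, b, c, rfl⟩ := exists_dup_split hnd
      refine ih (a ++ v :: c) ?_ ?_ ?_ ?_
      · have := hlen
        simp only [List.length_append, List.length_cons] at this ⊢
        omega
      · unfold List.Chain' at hc ⊢
        rw [List.isChain_append] at hc ⊢
        refine ⟨hc.1, ?_, ?_⟩
        · have h2 := hc.2.1
          rw [show v :: (b ++ v :: c) = (v :: b) ++ v :: c from rfl,
            List.isChain_append] at h2
          exact h2.2.1
        · simpa using hc.2.2
      · rw [List.head?_append] at hh ⊢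
        simpa using hh
      · rw [List.getLast?_append] at hl ⊢
        rw [show v :: (b ++ v :: c) = (v :: b) ++ v :: c from rfl,
          List.getLast?_append] at hl
        simpa using hl

lemma rtg_to_walk {F : Finset (V × V)} {x t : V}
    (h : Relation.ReflTransGen (fun u v => (u, v) ∈ F) x t) :
    ∃ l : List V, l.Chain' (fun u v => (u, v) ∈ F) ∧ l.head? = some x ∧
      l.getLast? = some t := by
  induction h using Relation.ReflTransGen.head_induction_on with
  | refl => exact ⟨[t], List.isChain_singleton _, rfl, rfl⟩
  | head h' _ ih =>
    obtain ⟨l, hc, hh, hl⟩ := ih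
    rcases l with _ | ⟨y, l'⟩
    · simp at hh
    · refine ⟨_ :: y :: l', ?_, rfl, ?_⟩
      · unfold List.Chain'
        rw [List.isChain_cons_cons]
        exact ⟨(Option.some.inj hh).symm ▸ h', hc⟩
      · rwa [List.getLast?_cons_cons]

lemma exists_path_of_rtg {F : Finset (V × V)} {x t : V}
    (h : Relation.ReflTransGen (fun u v => (u, v) ∈ F) x t) :
    ∃ p : List V, p.Nodup ∧ p.Chain' (fun u v => (u, v) ∈ F) ∧ p.head? = some x ∧
      p.getLast? = some t := by
  obtain ⟨l, hc, hh, hl⟩ := rtg_to_walk h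
  exact walk_to_path l.length l le_rfl hc hh hl

/-- If `x` has positive surplus and every vertex other than `x, t` has nonnegative
surplus, then `t` is reachable from `x` using arcs of `F`. -/
lemma reach {t : V} : ∀ (n : ℕ) (F : Finset (V × V)), F.card = n → ∀ x, x ≠ t →
    0 < deg F x → (∀ v, v ≠ x → v ≠ t → 0 ≤ deg F v) →
    Relation.ReflTransGen (fun u v => (u, v) ∈ F) x t := by
  intro n
  induction n with
  | zero =>
    intro F hF x hxt hdx _
    rw [Finset.card_eq_zero] at hF
    subst hF
    simp [deg] at hdx
  | succ n ih =>
    intro F hF x hxt hdx hnn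
    -- find outgoing arc
    have hpos : 0 < (F.filter (fun a => a.1 = x)).card := by
      by_contra h
      push_neg at h
      interval_cases h' : (F.filter (fun a => a.1 = x)).card
      · unfold deg at hdx; rw [h'] at hdx; omega
    obtain ⟨a, ha⟩ := Finset.card_pos.mp hpos
    rw [Finset.mem_filter] at ha
    obtain ⟨haF0, hax⟩ := ha
    set u := a.2 with hu
    have haF : (x, u) ∈ F := by
      have hxa : (x, u) = a := by rw [← hax]
      rwa [hxa]
    clear haF0 hax
    by_cases hut : u = x
    · -- self-loop: remove it
      have hF' : (F.erase (x, u)).card = n := by rw [Finset.card_erase_of_mem haF, hF]; rfl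
      have hdeg : ∀ v, deg (F.erase (x, u)) v = deg F v := by
        intro v
        rw [Finset.erase_eq, deg_sdiff (Finset.singleton_subset_iff.mpr haF),
          deg_singleton]
        simp only [hut]
        ring
      have := ih (F.erase (x, u)) hF' x hxt (hdeg x ▸ hdx)
        (fun v hv hvt => (hdeg v) ▸ hnn v hv hvt)
      exact Relation.ReflTransGen.mono (fun a b hab => Finset.mem_of_mem_erase hab) _ _ this
    · by_cases hutt : u = t
      · exact Relation.ReflTransGen.single (hutt ▸ haF)
      · -- remove arc (x,u), recurse from u
        set F' := F.erase (x, u) with hF'def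
        have hF' : F'.card = n := by rw [hF'def, Finset.card_erase_of_mem haF, hF]; rfl
        have hdeg : ∀ v, deg F' v = deg F v -
            (if x = v then 1 else 0) + (if u = v then 1 else 0) := by
          intro v
          rw [hF'def, Finset.erase_eq, deg_sdiff (Finset.singleton_subset_iff.mpr haF),
            deg_singleton]
          simp only []
          ring
        have hdu : 0 < deg F' u := by
          rw [hdeg u, if_pos rfl, if_neg (fun h => hut h.symm)]
          have := hnn u hut hutt
          omega
        have hnn' : ∀ v, v ≠ u → v ≠ t → 0 ≤ deg F' v := by
          intro v hvu hvt
          rw [hdeg v]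
          by_cases hvx : v = x
          · subst hvx
            rw [if_pos rfl, if_neg (fun h => hvu h.symm)]
            omega
          · rw [if_neg (fun h => hvx h.symm), if_neg (fun h => hvu h.symm)]
            have := hnn v hvx hvt
            omega
        have hrec := ih F' hF' u hutt hdu hnn'
        have : Relation.ReflTransGen (fun a b => (a, b) ∈ F) u t :=
          Relation.ReflTransGen.mono (fun a b hab => Finset.mem_of_mem_erase hab) _ _ hrec
        exact Relation.ReflTransGen.head haF this

end AugAux



namespace AugAux
variable {V : Type*} [DecidableEq V]

lemma isPath_mono {E F : Finset (V × V)} {s t : V} {p : List V} (h : F ⊆ E)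
    (hp : IsPath F s t p) : IsPath E s t p :=
  ⟨hp.1, hp.2.1.imp (fun _ _ hab => h hab), hp.2.2⟩

lemma pathArcs_subset {F : Finset (V × V)} {s t : V} {p : List V} (hp : IsPath F s t p) :
    ∀ a ∈ pathArcs p, a ∈ F := fun a ha => chain'_of_pathArcs hp.2.1 a ha

lemma pathArcs_ne_nil {F : Finset (V × V)} {s t : V} {p : List V} (hst : s ≠ t)
    (hp : IsPath F s t p) : pathArcs p ≠ [] := by
  obtain ⟨hn, hc, hh, hl⟩ := hp
  rcases p with _ | ⟨x, l⟩
  · simp at hh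
  rcases l with _ | ⟨y, l'⟩
  · simp only [List.head?_cons, Option.some.injEq] at hh
    simp only [List.getLast?_singleton, Option.some.injEq] at hl
    exact absurd (hh.symm.trans hl) hst
  · rw [pathArcs_cons_cons]; simp

/-- Flow decomposition: a subset `F ⊆ E` with surplus `m` at `s` and balance at all
vertices other than `s, t` contains `m` pairwise edge-disjoint `s`–`t` paths. -/
lemma decomp {s t : V} (hst : s ≠ t) :
    ∀ (m : ℕ) (F : Finset (V × V)), deg F s = m →
      (∀ v, v ≠ s → v ≠ t → deg F v = 0) →
      ∃ Q : Finset (List V), Q.card = m ∧ (∀ p ∈ Q, IsPath F s t p) ∧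
        (Q : Set (List V)).Pairwise EdgeDisjoint := by
  intro m
  induction m with
  | zero => intro F _ _; exact ⟨∅, by simp, by simp, by simp⟩
  | succ m ih =>
    intro F hs hbal
    have hrtg : Relation.ReflTransGen (fun u v => (u, v) ∈ F) s t := by
      refine reach F.card F rfl s hst (by rw [hs]; positivity) ?_
      intro v hvs hvt
      rw [hbal v hvs hvt]
    obtain ⟨p, hn, hc, hh, hl⟩ := exists_path_of_rtg hrtg
    have hp : IsPath F s t p := ⟨hn, hc, hh, hl⟩
    have hsub : (pathArcs p).toFinset ⊆ F := by
      intro a ha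
      exact pathArcs_subset hp a (List.mem_toFinset.mp ha)
    set F' := F \ (pathArcs p).toFinset with hF'
    have hs' : deg F' s = m := by
      rw [hF', deg_sdiff hsub, deg_pathArcs_head hn hh hl hst, hs]
      push_cast; ring
    have hbal' : ∀ v, v ≠ s → v ≠ t → deg F' v = 0 := by
      intro v hvs hvt
      rw [hF', deg_sdiff hsub, deg_pathArcs_other hn hh hl hvs hvt, hbal v hvs hvt]
      ring
    obtain ⟨Q', hcard', hpaths', hpw'⟩ := ih F' hs' hbal'
    have hpnot : p ∉ Q' := by
      intro hpQ
      obtain ⟨a, ha⟩ := List.exists_mem_of_ne_nil _ (pathArcs_ne_nil hst hp)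
      have := pathArcs_subset (hpaths' p hpQ) a ha
      rw [hF', Finset.mem_sdiff] at this
      exact this.2 (List.mem_toFinset.mpr ha)
    have hdisj : ∀ q ∈ Q', EdgeDisjoint p q ∧ EdgeDisjoint q p := by
      intro q hq
      have hqF' : ∀ a ∈ pathArcs q, a ∈ F' := pathArcs_subset (hpaths' q hq)
      constructor
      · intro a hap haq
        have := hqF' a haq
        rw [hF', Finset.mem_sdiff] at this
        exact this.2 (List.mem_toFinset.mpr hap)
      · intro a haq hap
        have := hqF' a haq
        rw [hF', Finset.mem_sdiff] at this
        exact this.2 (List.mem_toFinset.mpr hap)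
    refine ⟨insert p Q', ?_, ?_, ?_⟩
    · rw [Finset.card_insert_of_notMem hpnot, hcard']
    · intro q hq
      rcases Finset.mem_insert.mp hq with rfl | hq
      · exact hp
      · exact isPath_mono (Finset.sdiff_subset) (hpaths' q hq)
    · rw [Finset.coe_insert]
      apply Set.Pairwise.insert hpw'
      intro q hq _
      exact ⟨(hdisj q hq).1, (hdisj q hq).2⟩

end AugAux





/-- If `P` is a set of `k` pairwise edge-disjoint `s`–`t` paths and the residual digraph
of `G` with respect to `P` contains a directed path from `s` to `t` (an augmenting path),
then there is a set of `k + 1` pairwise edge-disjoint `s`–`t` paths in `G`. -/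
theorem augmenting_path_gives_larger_family {V : Type*} [Fintype V] [DecidableEq V]
    (E : Finset (V × V)) (s t : V) (hst : s ≠ t)
    (P : Finset (List V)) (k : ℕ) (hcard : P.card = k)
    (hP : IsEdgeDisjointFamily E s t P)
    (haug : ∃ α : List V, IsPath (residualArcs E P) s t α) :
    ∃ Q : Finset (List V), Q.card = k + 1 ∧ IsEdgeDisjointFamily E s t Q := by
  classical
  obtain ⟨hPpaths, hPpw⟩ := hP
  obtain ⟨α, hα⟩ := haug
  set F : Finset (V × V) := flowArcs P with hFdef
  -- pairwise disjoint arc sets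
  have hdisjF : ∀ p ∈ P, ∀ q ∈ P, p ≠ q →
      Disjoint ((pathArcs p).toFinset) ((pathArcs q).toFinset) := by
    intro p hp q hq hpq
    rw [Finset.disjoint_left]
    intro a hap haq
    exact hPpw (by exact_mod_cast hp) (by exact_mod_cast hq) hpq a
      (List.mem_toFinset.mp hap) (List.mem_toFinset.mp haq)
  have hdegF : ∀ v, AugAux.deg F v = ∑ p ∈ P, AugAux.deg (pathArcs p).toFinset v :=
    fun v => AugAux.deg_biUnion hdisjF v
  have hdegFs : AugAux.deg F s = (k : ℤ) := by
    rw [hdegF s]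
    rw [Finset.sum_congr rfl (fun p hp => by
      obtain ⟨hn, _, hh, hl⟩ := hPpaths p hp
      exact AugAux.deg_pathArcs_head hn hh hl hst)]
    simp [hcard]
  have hdegFbal : ∀ v, v ≠ s → v ≠ t → AugAux.deg F v = 0 := by
    intro v hvs hvt
    rw [hdegF v]
    rw [Finset.sum_congr rfl (fun p hp => by
      obtain ⟨hn, _, hh, hl⟩ := hPpaths p hp
      exact AugAux.deg_pathArcs_other hn hh hl hvs hvt)]
    simp
  have hFE : F ⊆ E := by
    intro a ha
    rw [hFdef, flowArcs, Finset.mem_biUnion] at ha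
    obtain ⟨p, hp, hap⟩ := ha
    exact AugAux.pathArcs_subset (hPpaths p hp) a (List.mem_toFinset.mp hap)
  -- arcs of the augmenting path
  obtain ⟨hαn, hαc, hαh, hαl⟩ := hα
  set A : Finset (V × V) := (pathArcs α).toFinset with hAdef
  have hAres : A ⊆ residualArcs E P := by
    intro a ha
    exact AugAux.chain'_of_pathArcs hαc a (List.mem_toFinset.mp ha)
  set Af : Finset (V × V) := A ∩ (E \ F) with hAfdef
  set Ab : Finset (V × V) := A \ (E \ F) with hAbdef
  set R : Finset (V × V) := Ab.image (fun a => (a.2, a.1)) with hRdef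
  have hRF : R ⊆ F := by
    intro a ha
    rw [hRdef, Finset.mem_image] at ha
    obtain ⟨b, hb, rfl⟩ := ha
    rw [hAbdef, Finset.mem_sdiff] at hb
    have hbres := hAres hb.1
    rw [residualArcs, Finset.mem_union] at hbres
    rcases hbres with h | h
    · exact absurd h hb.2
    · rw [Finset.mem_image] at h
      obtain ⟨c, hc, hcb⟩ := h
      have : (b.2, b.1) = c := by rw [← hcb]
      rwa [this]
  set F' : Finset (V × V) := (F \ R) ∪ Af with hF'def
  have hF'E : F' ⊆ E := by
    intro a ha
    rw [hF'def, Finset.mem_union] at ha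
    rcases ha with h | h
    · exact hFE (Finset.mem_sdiff.mp h).1
    · exact (Finset.mem_sdiff.mp (Finset.mem_inter.mp h).2).1
  have hdisjAf : Disjoint (F \ R) Af := by
    apply Finset.disjoint_left.mpr
    intro a ha haf
    have : a ∈ E \ F := (Finset.mem_inter.mp haf).2
    exact (Finset.mem_sdiff.mp this).2 (Finset.mem_sdiff.mp ha).1
  have hdisjAb : Disjoint Af Ab := by
    apply Finset.disjoint_left.mpr
    intro a haf hab
    exact (Finset.mem_sdiff.mp hab).2 (Finset.mem_inter.mp haf).2
  have hAsplit : Af ∪ Ab = A := by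
    rw [hAfdef, hAbdef]
    exact sup_inf_sdiff A (E \ F)
  have hdegF' : ∀ v, AugAux.deg F' v = AugAux.deg F v + AugAux.deg A v := by
    intro v
    rw [hF'def, AugAux.deg_union hdisjAf, AugAux.deg_sdiff hRF, hRdef,
      AugAux.deg_image_swap, ← hAsplit, AugAux.deg_union hdisjAb]
    ring
  have hdegF's : AugAux.deg F' s = ((k + 1 : ℕ) : ℤ) := by
    rw [hdegF' s, hdegFs, hAdef, AugAux.deg_pathArcs_head hαn hαh hαl hst]
    push_cast; ring
  have hdegF'bal : ∀ v, v ≠ s → v ≠ t → AugAux.deg F' v = 0 := by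
    intro v hvs hvt
    rw [hdegF' v, hdegFbal v hvs hvt, hAdef,
      AugAux.deg_pathArcs_other hαn hαh hαl hvs hvt]
    ring
  obtain ⟨Q, hQcard, hQpaths, hQpw⟩ := AugAux.decomp hst (k + 1) F' hdegF's hdegF'bal
  exact ⟨Q, hQcard, fun q hq => AugAux.isPath_mono hF'E (hQpaths q hq), hQpw⟩
end

section
/- Let G = (V, E) be a finite digraph, s, t ∈ V with s ≠ t, and let P be a set of pairwise edge-disjoint directed paths from s to t. Then P has maximum cardinality among all sets of pairwise edge-disjoint s–t paths in G if and only if the residual digraph of G with respect to P contains no directed path from s to t. -/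
set_option linter.unusedSectionVars false
set_option linter.unusedVariables false

section Aux
variable {V : Type*} [DecidableEq V]

lemma pathArcs_cons_cons (a b : V) (l : List V) :
    pathArcs (a :: b :: l) = (a, b) :: pathArcs (b :: l) := rfl

lemma map_fst_pathArcs (p : List V) : (pathArcs p).map Prod.fst = p.dropLast := by
  match p with
  | [] => rfl
  | [a] => rfl
  | a :: b :: l =>
    rw [pathArcs_cons_cons, List.map_cons, map_fst_pathArcs (b :: l)]
    rfl

lemma map_snd_pathArcs (p : List V) : (pathArcs p).map Prod.snd = p.tail := by
  match p with
  | [] => rfl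
  | [a] => rfl
  | a :: b :: l =>
    rw [pathArcs_cons_cons, List.map_cons, map_snd_pathArcs (b :: l)]
    rfl

lemma pathArcs_nodup {p : List V} (h : p.Nodup) : (pathArcs p).Nodup := by
  have h1 : (p.dropLast).Nodup := h.sublist (List.dropLast_sublist p)
  rw [← map_fst_pathArcs] at h1
  exact h1.of_map _

lemma length_pathArcs (p : List V) : (pathArcs p).length = p.length - 1 := by
  unfold pathArcs
  rw [List.length_zip, List.length_tail]
  omega

lemma mem_pathArcs_iff {p : List V} {a : V × V} :
    a ∈ pathArcs p ↔ ∃ (i : ℕ) (h : i + 1 < p.length), p[i] = a.1 ∧ p[i+1] = a.2 := by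
  rw [List.mem_iff_getElem]
  constructor
  · rintro ⟨i, hi, hget⟩
    rw [length_pathArcs] at hi
    have hi' : i + 1 < p.length := by omega
    have key : (pathArcs p)[i]'(by rw [length_pathArcs]; omega) = (p[i], p[i+1]) := by
      simp [pathArcs, List.getElem_zip, List.getElem_tail]
    rw [key] at hget
    exact ⟨i, hi', congrArg Prod.fst hget, congrArg Prod.snd hget⟩
  · rintro ⟨i, h, h1, h2⟩
    refine ⟨i, by rw [length_pathArcs]; omega, ?_⟩
    have key : (pathArcs p)[i]'(by rw [length_pathArcs]; omega) = (p[i], p[i+1]) := by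
      simp [pathArcs, List.getElem_zip, List.getElem_tail]
    rw [key, h1, h2]

lemma fst_mem_of_mem_pathArcs {p : List V} {a : V × V} (h : a ∈ pathArcs p) : a.1 ∈ p := by
  rw [mem_pathArcs_iff] at h
  obtain ⟨i, hi, h1, _⟩ := h
  exact h1 ▸ List.getElem_mem _

lemma pathArcs_subset {E : Finset (V × V)} {s t : V} {p : List V}
    (hp : IsPath E s t p) : ∀ a ∈ pathArcs p, a ∈ E := by
  intro a ha
  rw [mem_pathArcs_iff] at ha
  obtain ⟨i, h, h1, h2⟩ := ha
  have := List.isChain_iff_getElem.1 hp.2.1 i (by omega)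
  rw [h1, h2] at this
  simpa using this

lemma isPath_mono {E E' : Finset (V × V)} {s t : V} {p : List V}
    (hE : E ⊆ E') (hp : IsPath E s t p) : IsPath E' s t p :=
  ⟨hp.1, hp.2.1.imp (fun a b h => hE h), hp.2.2⟩

lemma pathArcs_ne_nil {E : Finset (V × V)} {s t : V} {p : List V}
    (hp : IsPath E s t p) (hst : s ≠ t) : pathArcs p ≠ [] := by
  intro hnil
  have hne : p ≠ [] := by rintro rfl; exact absurd hp.2.2.1 (by simp)
  have hlen : p.length - 1 = 0 := by rw [← length_pathArcs, hnil]; rfl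
  have : p.length = 1 := by
    have := List.length_pos_iff.2 hne; omega
  obtain ⟨x, hx⟩ := List.length_eq_one_iff.1 this
  subst hx
  have h1 : x = s := by simpa using hp.2.2.1
  have h2 : x = t := by simpa using hp.2.2.2
  exact hst (h1 ▸ h2)

/-! ### Degrees and excess -/

def outD (F : Finset (V × V)) (v : V) : ℤ := (F.filter (fun a => a.1 = v)).card
def inD (F : Finset (V × V)) (v : V) : ℤ := (F.filter (fun a => a.2 = v)).card
def exc (F : Finset (V × V)) (v : V) : ℤ := outD F v - inD F v

lemma exc_union {F G : Finset (V × V)} (h : Disjoint F G) (v : V) :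
    exc (F ∪ G) v = exc F v + exc G v := by
  unfold exc outD inD
  rw [Finset.filter_union, Finset.filter_union,
    Finset.card_union_of_disjoint (Finset.disjoint_filter_filter h),
    Finset.card_union_of_disjoint (Finset.disjoint_filter_filter h)]
  push_cast; ring

lemma exc_sdiff {F G : Finset (V × V)} (h : G ⊆ F) (v : V) :
    exc (F \ G) v = exc F v - exc G v := by
  have hF : F = (F \ G) ∪ G := (Finset.sdiff_union_of_subset h).symm
  have hd : Disjoint (F \ G) G := Finset.sdiff_disjoint
  have h2 := exc_union hd v
  rw [← hF] at h2
  omega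

lemma exc_image_swap (F : Finset (V × V)) (v : V) :
    exc (F.image (fun a => (a.2, a.1))) v = - exc F v := by
  have hinj : Set.InjOn (fun a : V × V => (a.2, a.1)) F := fun a _ b _ h => by
    cases a; cases b; simpa [Prod.ext_iff, and_comm] using h
  unfold exc outD inD
  have h1 : (F.image (fun a => (a.2, a.1))).filter (fun a => a.1 = v)
      = (F.filter (fun a => a.2 = v)).image (fun a => (a.2, a.1)) := by
    ext a
    simp [Finset.mem_filter, Finset.mem_image, Prod.ext_iff]
    aesop
  have h2 : (F.image (fun a => (a.2, a.1))).filter (fun a => a.2 = v)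
      = (F.filter (fun a => a.1 = v)).image (fun a => (a.2, a.1)) := by
    ext a
    simp [Finset.mem_filter, Finset.mem_image, Prod.ext_iff]
  rw [h1, h2, Finset.card_image_of_injOn (hinj.mono (Finset.filter_subset _ _)),
    Finset.card_image_of_injOn (hinj.mono (Finset.filter_subset _ _))]
  ring

lemma card_toFinset_filter_of_nodup {α : Type*} [DecidableEq α] (l : List α)
    (h : l.Nodup) (q : α → Prop) [DecidablePred q] :
    (l.toFinset.filter q).card = l.countP (fun a => decide (q a)) := by
  have h1 : l.toFinset.filter q = (l.filter (fun a => decide (q a))).toFinset := by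
    ext a; simp
  rw [h1, List.toFinset_card_of_nodup (h.filter _), List.countP_eq_length_filter]

lemma outD_pathArcs {p : List V} (h : p.Nodup) (v : V) :
    outD (pathArcs p).toFinset v = p.dropLast.count v := by
  unfold outD
  rw [card_toFinset_filter_of_nodup _ (pathArcs_nodup h)]
  rw [← map_fst_pathArcs p, List.count_eq_countP, List.countP_map]
  norm_cast

lemma inD_pathArcs {p : List V} (h : p.Nodup) (v : V) :
    inD (pathArcs p).toFinset v = p.tail.count v := by
  unfold inD
  rw [card_toFinset_filter_of_nodup _ (pathArcs_nodup h)]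
  rw [← map_snd_pathArcs p, List.count_eq_countP, List.countP_map]
  norm_cast

lemma exc_pathArcs {p : List V} {s t : V} (h : p.Nodup)
    (hh : p.head? = some s) (hl : p.getLast? = some t) (hst : s ≠ t) (v : V) :
    exc (pathArcs p).toFinset v = if v = s then 1 else if v = t then -1 else 0 := by
  have hne : p ≠ [] := by rintro rfl; simp at hh
  obtain ⟨x, r, rfl⟩ := List.exists_cons_of_ne_nil hne
  have hx : x = s := by simpa using hh
  subst hx
  have hlast : (x :: r).getLast (by simp) = t := by
    have h5 := List.getLast?_eq_getLast (l := x :: r) (by simp)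
    rw [hl] at h5; exact (Option.some_injective _ h5.symm)
  have hdl : (x :: r).dropLast ++ [t] = x :: r := by
    conv_rhs => rw [← List.dropLast_append_getLast (l := x :: r) (by simp)]
    rw [hlast]
  have hxr : x ∉ r := (List.nodup_cons.1 h).1
  have hrne : r ≠ [] := by
    rintro rfl
    simp at hlast; exact hst hlast
  have hdl2 : (x :: r).dropLast = x :: r.dropLast := by
    cases r
    · exact absurd rfl hrne
    · rfl
  have hnddl : ((x :: r).dropLast).Nodup := h.sublist (List.dropLast_sublist _)
  have htdl : t ∉ (x :: r).dropLast := by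
    intro ht
    have h6 : ((x :: r).dropLast ++ [t]).Nodup := hdl.symm ▸ h
    exact (List.nodup_append.1 h6).2.2 t ht t (by simp) rfl
  have hndr : r.Nodup := (List.nodup_cons.1 h).2
  unfold exc
  rw [outD_pathArcs h, inD_pathArcs h]
  have htail : (x :: r).tail = r := rfl
  rw [htail]
  by_cases hvx : v = x
  · subst hvx
    rw [if_pos rfl, hdl2]
    have c1 : (v :: r.dropLast).count v = 1 := by
      rw [List.count_cons_self, List.count_eq_zero_of_not_mem
        (fun hm => hxr ((List.dropLast_sublist r).mem hm))]
    have c2 : r.count v = 0 := List.count_eq_zero_of_not_mem hxr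
    rw [c1, c2]; norm_num
  · rw [if_neg hvx]
    by_cases hvt : v = t
    · subst hvt
      rw [if_pos rfl, List.count_eq_zero_of_not_mem htdl]
      have htr : v ∈ r := by
        have h7 : v ∈ x :: r := hlast ▸ List.getLast_mem (by simp)
        rcases List.mem_cons.1 h7 with h7 | h7
        · exact absurd h7 hvx
        · exact h7
      rw [List.count_eq_one_of_mem hndr htr]
      norm_num
    · rw [if_neg hvt]
      by_cases hvm : v ∈ x :: r
      · have hvdl : v ∈ (x :: r).dropLast := by
          have : v ∈ (x :: r).dropLast ++ [t] := hdl.symm ▸ hvm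
          rcases List.mem_append.1 this with h8 | h8
          · exact h8
          · simp at h8; exact absurd h8 hvt
        have hvr : v ∈ r := by
          rcases List.mem_cons.1 hvm with h9 | h9
          · exact absurd h9 hvx
          · exact h9
        rw [List.count_eq_one_of_mem hnddl hvdl, List.count_eq_one_of_mem hndr hvr]
        norm_num
      · rw [List.count_eq_zero_of_not_mem
            (fun hm => hvm ((List.dropLast_sublist _).mem hm)),
          List.count_eq_zero_of_not_mem (fun hm => hvm (List.mem_cons_of_mem _ hm))]
        norm_num

/-! ### Reachability -/

lemma isPath_singleton (F : Finset (V × V)) (s : V) : IsPath F s s [s] := by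
  refine ⟨by simp, List.isChain_singleton _, rfl, rfl⟩

lemma reach_step {F : Finset (V × V)} {s v w : V} {p : List V}
    (hp : IsPath F s v p) (hvw : (v, w) ∈ F) : ∃ q, IsPath F s w q := by
  by_cases hw : w ∈ p
  · set i := p.idxOf w with hi
    have hilt : i < p.length := List.idxOf_lt_length_iff.2 hw
    refine ⟨p.take (i+1), ?_, hp.2.1.prefix (List.take_prefix _ _), ?_, ?_⟩
    · exact hp.1.sublist (List.take_sublist _ _)
    · have hne : p ≠ [] := by rintro rfl; simp at hw
      obtain ⟨x, r, rfl⟩ := List.exists_cons_of_ne_nil hne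
      have : (x :: r).take (i+1) = x :: r.take i := rfl
      rw [this]
      simpa using hp.2.2.1
    · have hlen : (p.take (i+1)).length = i + 1 := by
        rw [List.length_take]; omega
      rw [List.getLast?_eq_getElem?, hlen]
      simp only [Nat.add_sub_cancel]
      rw [List.getElem?_take, if_pos (by omega), List.getElem?_eq_getElem hilt]
      simp [hi, List.getElem_idxOf]
  · refine ⟨p ++ [w], ?_, ?_, ?_, ?_⟩
    · rw [List.nodup_append]
      refine ⟨hp.1, by simp, ?_⟩
      intro a ha b hb hab; simp only [List.mem_singleton] at hb
      subst hb; subst hab; exact hw ha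
    · rw [show List.Chain' (fun u v => (u, v) ∈ F) (p ++ [w]) ↔ List.IsChain _ (p ++ [w]) from Iff.rfl, List.isChain_append]
      refine ⟨hp.2.1, by simp, ?_⟩
      intro x hx y hy
      have hx' : x = v := by
        rw [hp.2.2.2] at hx; simpa using hx.symm
      have hy' : y = w := by
        simp only [List.head?_cons, Option.mem_def, Option.some.injEq] at hy
        exact hy.symm
      rw [hx', hy']; exact hvw
    · have hne : p ≠ [] := by rintro rfl; exact absurd hp.2.2.1 (by simp)
      rw [List.head?_append_of_ne_nil _ hne]
      exact hp.2.2.1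
    · exact List.getLast?_concat

lemma sum_card_filter_fst (F : Finset (V × V)) (S : Finset V) :
    ∑ v ∈ S, (F.filter (fun a => a.1 = v)).card = (F.filter (fun a => a.1 ∈ S)).card := by
  simp only [Finset.card_filter]
  rw [Finset.sum_comm]
  apply Finset.sum_congr rfl
  intro a _
  rw [Finset.sum_ite_eq S a.1 (fun _ => 1)]

lemma sum_card_filter_snd (F : Finset (V × V)) (S : Finset V) :
    ∑ v ∈ S, (F.filter (fun a => a.2 = v)).card = (F.filter (fun a => a.2 ∈ S)).card := by
  simp only [Finset.card_filter]
  rw [Finset.sum_comm]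
  apply Finset.sum_congr rfl
  intro a _
  rw [Finset.sum_ite_eq S a.2 (fun _ => 1)]

lemma exists_path_of_exc_pos [Fintype V] {F : Finset (V × V)} {s t : V}
    (h0 : ∀ v, v ≠ s → v ≠ t → exc F v = 0) (hs : 0 < exc F s) :
    ∃ p, IsPath F s t p := by
  classical
  by_contra hno
  set S : Finset V := Finset.univ.filter (fun v => ∃ p, IsPath F s v p) with hS
  have hmem : ∀ v, v ∈ S ↔ ∃ p, IsPath F s v p := by
    intro v; simp [hS]
  have hsS : s ∈ S := (hmem s).2 ⟨[s], isPath_singleton F s⟩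
  have htS : t ∉ S := fun ht => hno ((hmem t).1 ht)
  have hclosed : ∀ a ∈ F, a.1 ∈ S → a.2 ∈ S := by
    rintro ⟨x, y⟩ ha hx
    obtain ⟨p, hp⟩ := (hmem x).1 hx
    exact (hmem y).2 (reach_step hp ha)
  have hsub : F.filter (fun a => a.1 ∈ S) ⊆ F.filter (fun a => a.2 ∈ S) := by
    intro a ha
    rw [Finset.mem_filter] at *
    exact ⟨ha.1, hclosed a ha.1 ha.2⟩
  have hsum : ∑ v ∈ S, exc F v ≤ 0 := by
    unfold exc outD inD
    rw [Finset.sum_sub_distrib]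
    push_cast [← Nat.cast_sum]
    rw [sum_card_filter_fst, sum_card_filter_snd]
    have := Finset.card_le_card hsub
    omega
  have hsum2 : ∑ v ∈ S, exc F v = exc F s :=
    Finset.sum_eq_single_of_mem s hsS
      (fun v hv hne => h0 v hne (fun h => htS (h ▸ hv)))
  omega

/-! ### Flow decomposition -/

lemma exists_family [Fintype V] {s t : V} (hst : s ≠ t) :
    ∀ (k : ℕ) (F : Finset (V × V)),
      (∀ v, v ≠ s → v ≠ t → exc F v = 0) → exc F s = k →
      ∃ Q : Finset (List V), Q.card = k ∧ (∀ p ∈ Q, IsPath F s t p) ∧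
        (Q : Set (List V)).Pairwise EdgeDisjoint := by
  intro k
  induction k with
  | zero => exact fun F _ _ => ⟨∅, by simp, by simp, by simp⟩
  | succ k ih =>
    intro F h0 hk
    obtain ⟨p, hp⟩ := exists_path_of_exc_pos h0 (by rw [hk]; positivity)
    set A : Finset (V × V) := (pathArcs p).toFinset with hA
    have hAsub : A ⊆ F := by
      intro a ha
      exact pathArcs_subset hp a (List.mem_toFinset.1 ha)
    have hexcA : ∀ v, exc A v = if v = s then 1 else if v = t then -1 else 0 :=
      exc_pathArcs hp.1 hp.2.2.1 hp.2.2.2 hst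
    set F' : Finset (V × V) := F \ A with hF'
    have h0' : ∀ v, v ≠ s → v ≠ t → exc F' v = 0 := by
      intro v hv1 hv2
      rw [hF', exc_sdiff hAsub, hexcA, if_neg hv1, if_neg hv2, h0 v hv1 hv2]
      ring
    have hk' : exc F' s = k := by
      rw [hF', exc_sdiff hAsub, hexcA, if_pos rfl, hk]
      push_cast; ring
    obtain ⟨Q, hQcard, hQpaths, hQpair⟩ := ih F' h0' hk'
    have harc : ∃ a, a ∈ pathArcs p := by
      have := pathArcs_ne_nil hp hst
      exact List.exists_mem_of_ne_nil _ this
    have hpQ : p ∉ Q := by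
      intro hpq
      obtain ⟨a, ha⟩ := harc
      have h1 : a ∈ F' := pathArcs_subset (hQpaths p hpq) a ha
      rw [hF', Finset.mem_sdiff] at h1
      exact h1.2 (List.mem_toFinset.2 ha)
    refine ⟨insert p Q, ?_, ?_, ?_⟩
    · rw [Finset.card_insert_of_notMem hpQ, hQcard]
    · intro q hq
      rcases Finset.mem_insert.1 hq with rfl | hq'
      · exact hp
      · exact isPath_mono (Finset.sdiff_subset) (hQpaths q hq')
    · rw [Finset.coe_insert]
      have hsymm : Symmetric (EdgeDisjoint (V := V)) :=
        fun x y h a hay hax => h a hax hay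
      rw [haveI : Std.Symm (EdgeDisjoint (V := V)) := ⟨fun a b h => hsymm h⟩; Set.pairwise_insert_of_symm]
      refine ⟨hQpair, ?_⟩
      intro q hq _
      intro a hap haq
      have h1 : a ∈ F' := pathArcs_subset (hQpaths q hq) a haq
      rw [hF', Finset.mem_sdiff] at h1
      exact h1.2 (List.mem_toFinset.2 hap)

/-! ### Excess of the flow -/

lemma flowArcs_subset {E : Finset (V × V)} {s t : V} {P : Finset (List V)}
    (hP : IsEdgeDisjointFamily E s t P) : flowArcs P ⊆ E := by
  intro a ha
  rw [flowArcs, Finset.mem_biUnion] at ha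
  obtain ⟨p, hp, hap⟩ := ha
  exact pathArcs_subset (hP.1 p hp) a (List.mem_toFinset.1 hap)

lemma exc_flowArcs {E : Finset (V × V)} {s t : V} {P : Finset (List V)}
    (hP : IsEdgeDisjointFamily E s t P) (hst : s ≠ t) (v : V) :
    exc (flowArcs P) v =
      if v = s then (P.card : ℤ) else if v = t then -(P.card : ℤ) else 0 := by
  have hdisj : ∀ p ∈ P, ∀ q ∈ P, p ≠ q →
      Disjoint (pathArcs p).toFinset (pathArcs q).toFinset := by
    intro p hp q hq hne
    rw [Finset.disjoint_left]
    intro a hap haq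
    exact hP.2 hp hq hne a (List.mem_toFinset.1 hap) (List.mem_toFinset.1 haq)
  have houtD : ∀ (f : V × V → Prop) [DecidablePred f],
      ((flowArcs P).filter f).card = ∑ p ∈ P, ((pathArcs p).toFinset.filter f).card := by
    intro f _
    rw [flowArcs, Finset.filter_biUnion]
    exact Finset.card_biUnion (fun p hp q hq hne =>
      Finset.disjoint_filter_filter (hdisj p hp q hq hne))
  have hexc : exc (flowArcs P) v = ∑ p ∈ P, exc (pathArcs p).toFinset v := by
    unfold exc outD inD
    rw [houtD, houtD]
    push_cast
    rw [Finset.sum_sub_distrib]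
  rw [hexc]
  have hterm : ∀ p ∈ P, exc (pathArcs p).toFinset v
      = if v = s then 1 else if v = t then -1 else 0 := by
    intro p hp
    exact exc_pathArcs (hP.1 p hp).1 (hP.1 p hp).2.2.1 (hP.1 p hp).2.2.2 hst v
  rw [Finset.sum_congr rfl hterm]
  by_cases hvs : v = s
  · simp [hvs]
  · by_cases hvt : v = t
    · simp [hvt, hst.symm, hvs]
    · simp [hvs, hvt]

/-! ### Crossing arcs -/

lemma exists_crossing {S : Finset V} {p : List V} {s t : V}
    (hh : p.head? = some s) (hl : p.getLast? = some t) (hs : s ∈ S) (ht : t ∉ S) :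
    ∃ a ∈ pathArcs p, a.1 ∈ S ∧ a.2 ∉ S := by
  match p with
  | [] => simp at hh
  | [x] =>
    have h1 : x = s := by simpa using hh
    have h2 : x = t := by simpa using hl
    exact absurd (h1 ▸ hs) (h2 ▸ ht)
  | x :: y :: l =>
    have hx : x = s := by simpa using hh
    by_cases hy : y ∈ S
    · have hl' : (y :: l).getLast? = some t := by
        rw [← hl]; exact List.getLast?_cons_cons.symm
      obtain ⟨a, ha, h1, h2⟩ := exists_crossing (p := y :: l) rfl hl' hy ht
      exact ⟨a, List.mem_cons_of_mem _ ha, h1, h2⟩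
    · exact ⟨(x, y), by rw [pathArcs_cons_cons]; exact List.mem_cons_self,
        hx ▸ hs, hy⟩

lemma head_not_mem_all {S : Finset V} {p : List V}
    (hmono : ∀ a ∈ pathArcs p, a.2 ∈ S → a.1 ∈ S) {y : V}
    (hh : p.head? = some y) (hy : y ∉ S) :
    ∀ v ∈ p, v ∉ S := by
  match p with
  | [] => simp
  | [x] =>
    have h1 : x = y := by simpa using hh
    intro v hv
    rcases List.mem_singleton.1 hv with rfl
    exact h1 ▸ hy
  | x :: z :: l =>
    have h1 : x = y := by simpa using hh
    have hz : z ∉ S := by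
      intro hzS
      have := hmono (x, z) (by rw [pathArcs_cons_cons]; exact List.mem_cons_self) hzS
      exact hy (h1 ▸ this)
    have hrec := head_not_mem_all (p := z :: l)
      (fun a ha h => hmono a (List.mem_cons_of_mem _ ha) h) rfl hz
    intro v hv
    rcases List.mem_cons.1 hv with rfl | hv'
    · exact h1 ▸ hy
    · exact hrec v hv'

lemma crossing_unique {S : Finset V} {p : List V}
    (hmono : ∀ a ∈ pathArcs p, a.2 ∈ S → a.1 ∈ S) :
    ∀ a ∈ pathArcs p, ∀ b ∈ pathArcs p,
      a.1 ∈ S → a.2 ∉ S → b.1 ∈ S → b.2 ∉ S → a = b := by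
  match p with
  | [] => simp [pathArcs]
  | [x] => simp [pathArcs]
  | x :: y :: l =>
    intro a ha b hb ha1 ha2 hb1 hb2
    rw [pathArcs_cons_cons] at ha hb
    have hmono' : ∀ a ∈ pathArcs (y :: l), a.2 ∈ S → a.1 ∈ S :=
      fun a ha h => hmono a (List.mem_cons_of_mem _ ha) h
    rcases List.mem_cons.1 ha with rfl | ha' <;> rcases List.mem_cons.1 hb with hb' | hb'
    · exact hb'.symm
    · -- a = (x,y), b in tail; y ∉ S
      exfalso
      have hyS : y ∉ S := ha2
      have := head_not_mem_all (p := y :: l) hmono' rfl hyS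
      exact this b.1 (fst_mem_of_mem_pathArcs hb') hb1
    · exfalso
      have hyS : y ∉ S := by rw [hb'] at hb2; exact hb2
      have := head_not_mem_all (p := y :: l) hmono' rfl hyS
      exact this a.1 (fst_mem_of_mem_pathArcs ha') ha1
    · exact crossing_unique hmono' a ha' b hb' ha1 ha2 hb1 hb2

end Aux

/-- A set `P` of pairwise edge-disjoint `s`–`t` paths has maximum cardinality among all
such sets if and only if the residual digraph of `G` with respect to `P` contains no
directed path from `s` to `t`. -/
theorem max_family_iff_no_augmenting_path {V : Type*} [Fintype V] [DecidableEq V]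
    (E : Finset (V × V)) (s t : V) (hst : s ≠ t)
    (P : Finset (List V)) (hP : IsEdgeDisjointFamily E s t P) :
    (∀ Q : Finset (List V), IsEdgeDisjointFamily E s t Q → Q.card ≤ P.card) ↔
      ¬ ∃ α : List V, IsPath (residualArcs E P) s t α := by
  classical
  constructor
  · -- max → no augmenting path
    intro hmax ⟨α, hα⟩
    set F : Finset (V × V) := flowArcs P with hF
    set Sb : Finset (V × V) := (pathArcs α).toFinset.filter (fun a => (a.2, a.1) ∈ F) with hSb
    set Af : Finset (V × V) := (pathArcs α).toFinset.filter (fun a => (a.2, a.1) ∉ F) with hAf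
    set B : Finset (V × V) := Sb.image (fun a => (a.2, a.1)) with hB
    have hFE : F ⊆ E := flowArcs_subset hP
    have hBF : B ⊆ F := by
      intro b hb
      rw [hB, Finset.mem_image] at hb
      obtain ⟨a, ha, rfl⟩ := hb
      exact (Finset.mem_filter.1 ha).2
    have hAfE : Af ⊆ E \ F := by
      intro a ha
      rw [hAf, Finset.mem_filter] at ha
      have hares : a ∈ residualArcs E P := pathArcs_subset hα a (List.mem_toFinset.1 ha.1)
      rw [residualArcs, Finset.mem_union] at hares
      rcases hares with h | h
      · exact h
      · exfalso
        rw [Finset.mem_image] at h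
        obtain ⟨b, hb, hba⟩ := h
        apply ha.2
        have : b = (a.2, a.1) := by
          cases a; cases b
          simpa [Prod.ext_iff, and_comm] using hba
        exact this ▸ hb
    set F' : Finset (V × V) := (F \ B) ∪ Af with hF'
    have hdisjAf : Disjoint (F \ B) Af := by
      rw [Finset.disjoint_right]
      intro a ha
      have := hAfE ha
      rw [Finset.mem_sdiff] at this
      rw [Finset.mem_sdiff]
      exact fun h => this.2 h.1
    have hF'E : F' ⊆ E := by
      rw [hF']
      intro a ha
      rcases Finset.mem_union.1 ha with h | h
      · exact hFE (Finset.mem_sdiff.1 h).1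
      · exact (Finset.mem_sdiff.1 (hAfE h)).1
    -- excess computation
    have hsplit : Sb ∪ Af = (pathArcs α).toFinset := by
      rw [hSb, hAf]
      exact Finset.filter_union_filter_not_eq _ _
    have hdisjSb : Disjoint Sb Af := by
      rw [hSb, hAf]
      exact Finset.disjoint_filter_filter_not _ _ _
    have hexcα := exc_pathArcs hα.1 hα.2.2.1 hα.2.2.2 hst
    have hexcF := exc_flowArcs hP hst
    have hexcF' : ∀ v, exc F' v = exc F v
        + (if v = s then 1 else if v = t then -1 else 0) := by
      intro v
      rw [hF', exc_union hdisjAf, exc_sdiff hBF, hB, exc_image_swap]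
      have h5 : exc Sb v + exc Af v = exc (pathArcs α).toFinset v := by
        rw [← hsplit, exc_union hdisjSb]
      rw [← hexcα v, ← h5]
      ring
    have h0 : ∀ v, v ≠ s → v ≠ t → exc F' v = 0 := by
      intro v h1 h2
      rw [hexcF' v, hexcF v, if_neg h1, if_neg h2, if_neg h1, if_neg h2]
      ring
    have hks : exc F' s = ((P.card + 1 : ℕ) : ℤ) := by
      rw [hexcF' s, hexcF s, if_pos rfl, if_pos rfl]
      push_cast; ring
    obtain ⟨Q, hQcard, hQpaths, hQpair⟩ := exists_family hst (P.card + 1) F' h0 hks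
    have hQfam : IsEdgeDisjointFamily E s t Q :=
      ⟨fun q hq => isPath_mono hF'E (hQpaths q hq), hQpair⟩
    have := hmax Q hQfam
    omega
  · -- no augmenting path → max
    intro hno Q hQ
    set R : Finset V := Finset.univ.filter
      (fun v => ∃ p, IsPath (residualArcs E P) s v p) with hR
    have hmem : ∀ v, v ∈ R ↔ ∃ p, IsPath (residualArcs E P) s v p := by
      intro v; simp [hR]
    have hsR : s ∈ R := (hmem s).2 ⟨[s], isPath_singleton _ s⟩
    have htR : t ∉ R := fun ht => hno ((hmem t).1 ht)
    have hstep : ∀ v w, v ∈ R → (v, w) ∈ residualArcs E P → w ∈ R := by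
      intro v w hv hvw
      obtain ⟨p, hp⟩ := (hmem v).1 hv
      exact (hmem w).2 (reach_step hp hvw)
    -- all flow arcs entering R start in R
    have hflowmono : ∀ a : V × V, a ∈ flowArcs P → a.2 ∈ R → a.1 ∈ R := by
      intro a ha h2
      have : (a.2, a.1) ∈ residualArcs E P := by
        rw [residualArcs, Finset.mem_union, Finset.mem_image]
        exact Or.inr ⟨a, ha, rfl⟩
      exact hstep a.2 a.1 h2 this
    set Ecut : Finset (V × V) := E.filter (fun a => a.1 ∈ R ∧ a.2 ∉ R) with hEcut
    -- every q in Q has a crossing arc, injectively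
    have hQle : Q.card ≤ Ecut.card := by
      have hex : ∀ q ∈ Q, ∃ a, a ∈ pathArcs q ∧ a.1 ∈ R ∧ a.2 ∉ R := by
        intro q hq
        obtain ⟨a, ha, h1, h2⟩ := exists_crossing (hQ.1 q hq).2.2.1 (hQ.1 q hq).2.2.2 hsR htR
        exact ⟨a, ha, h1, h2⟩
      set f : List V → V × V := fun q =>
        if h : ∃ a, a ∈ pathArcs q ∧ a.1 ∈ R ∧ a.2 ∉ R then h.choose else (s, s) with hf
      apply Finset.card_le_card_of_injOn f
      · intro q hq
        have h := hex q hq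
        rw [hf]; simp only [dif_pos h]
        obtain ⟨ha, h1, h2⟩ := h.choose_spec
        rw [hEcut, Finset.mem_coe, Finset.mem_filter]
        exact ⟨pathArcs_subset (hQ.1 q hq) _ ha, h1, h2⟩
      · intro q1 hq1 q2 hq2 heq
        by_contra hne
        have h1 := hex q1 (by simpa using hq1)
        have h2 := hex q2 (by simpa using hq2)
        rw [hf] at heq
        simp only [dif_pos h1, dif_pos h2] at heq
        exact hQ.2 (by simpa using hq1) (by simpa using hq2) hne _
          h1.choose_spec.1 (heq ▸ h2.choose_spec.1)
    -- every cut arc is a flow arc of a unique path of P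
    have hcutle : Ecut.card ≤ P.card := by
      have hflow : ∀ a ∈ Ecut, a ∈ flowArcs P := by
        intro a ha
        rw [hEcut, Finset.mem_filter] at ha
        by_contra hnf
        have hres : a ∈ residualArcs E P := by
          rw [residualArcs, Finset.mem_union, Finset.mem_sdiff]
          exact Or.inl ⟨ha.1, hnf⟩
        have : a.2 ∈ R := by
          have := hstep a.1 a.2 ha.2.1 (by cases a; exact hres)
          exact this
        exact ha.2.2 this
      have hex : ∀ a ∈ Ecut, ∃ p, p ∈ P ∧ a ∈ pathArcs p := by
        intro a ha
        have := hflow a ha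
        rw [flowArcs, Finset.mem_biUnion] at this
        obtain ⟨p, hp, hap⟩ := this
        exact ⟨p, hp, List.mem_toFinset.1 hap⟩
      set g : V × V → List V := fun a =>
        if h : ∃ p, p ∈ P ∧ a ∈ pathArcs p then h.choose else [] with hg
      apply Finset.card_le_card_of_injOn g
      · intro a ha
        have h := hex a ha
        rw [hg]; simp only [dif_pos h]
        exact h.choose_spec.1
      · intro a1 ha1 a2 ha2 heq
        have h1 := hex a1 (by simpa using ha1)
        have h2 := hex a2 (by simpa using ha2)
        rw [hg] at heq
        simp only [dif_pos h1, dif_pos h2] at heq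
        set p := h1.choose with hp
        have hpP : p ∈ P := h1.choose_spec.1
        have ha1p : a1 ∈ pathArcs p := h1.choose_spec.2
        have ha2p : a2 ∈ pathArcs p := heq ▸ h2.choose_spec.2
        have hmono : ∀ a ∈ pathArcs p, a.2 ∈ R → a.1 ∈ R := by
          intro a hap h2'
          apply hflowmono a _ h2'
          rw [flowArcs, Finset.mem_biUnion]
          exact ⟨p, hpP, List.mem_toFinset.2 hap⟩
        have hc1 : a1.1 ∈ R ∧ a1.2 ∉ R := by
          have := ha1; simp only [hEcut, Finset.coe_filter, Set.mem_setOf_eq] at this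
          exact this.2
        have hc2 : a2.1 ∈ R ∧ a2.2 ∉ R := by
          have := ha2; simp only [hEcut, Finset.coe_filter, Set.mem_setOf_eq] at this
          exact this.2
        exact crossing_unique hmono a1 ha1p a2 ha2p hc1.1 hc1.2 hc2.1 hc2.2
    exact le_trans hQle hcutle
end
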